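/- arXiv:1504.03842 — 5 statements merged into one kernel-verified Lean document; each statement's English description precedes it below -/
import Mathlib

section
/- Let n ≥ 1, let p be a real number with 2^{-n} ≤ p ≤ 1/2, let ε > 0, and let t be a natural number with t ≤ n and 2^t ≥ 1/(p·ε). Set s = ⌈p·2^n⌉. If c is chosen uniformly at random from {0, 1, …, 2^t − 1}, then the probability q of the event c·2^{n−t} ≤ s satisfies s/2^n ≤ q ≤ (1+ε)·s/2^n. -/
/-- Let `2^{-n} ≤ p ≤ 1/2`, `ε > 0`, `t ≤ n` with `2^t ≥ 1/(p·ε)`,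
and `s = ⌈p·2^n⌉`. For `c` uniform on `{0, …, 2^t − 1}`, the probability `q` of
the event `c·2^{n−t} ≤ s` satisfies `s/2^n ≤ q ≤ (1+ε)·s/2^n`. -/
theorem stmt_5 (n t : ℕ) (hn : 1 ≤ n) (p ε : ℝ)
    (hplb : 1 / 2 ^ n ≤ p) (hpub : p ≤ 1 / 2) (hε : 0 < ε)
    (htn : t ≤ n) (ht : 1 / (p * ε) ≤ (2 : ℝ) ^ t) :
    (⌈p * 2 ^ n⌉₊ : ℝ) / 2 ^ n ≤
      ((Finset.univ.filter (fun c : Fin (2 ^ t) =>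
          (c : ℕ) * 2 ^ (n - t) ≤ ⌈p * 2 ^ n⌉₊)).card : ℝ) / 2 ^ t ∧
    ((Finset.univ.filter (fun c : Fin (2 ^ t) =>
        (c : ℕ) * 2 ^ (n - t) ≤ ⌈p * 2 ^ n⌉₊)).card : ℝ) / 2 ^ t ≤
      (1 + ε) * (⌈p * 2 ^ n⌉₊ : ℝ) / 2 ^ n := by
  have hp : 0 < p := lt_of_lt_of_le (by positivity) hplb
  set s := ⌈p * 2 ^ n⌉₊ with hs
  have h2nt : (0:ℕ) < 2 ^ (n - t) := Nat.pow_pos (by norm_num)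
  -- s ≤ 2^(n-1)
  have hsle : s ≤ 2 ^ (n - 1) := by
    rw [hs, Nat.ceil_le]
    push_cast
    have hn' : n = (n - 1) + 1 := (Nat.succ_pred_eq_of_pos hn).symm
    have hpw : (2:ℝ) ^ n = 2 ^ (n-1) * 2 := by
      conv_lhs => rw [hn']
      rw [pow_succ]
    rw [hpw]
    nlinarith [pow_pos (by norm_num : (0:ℝ) < 2) (n-1)]
  set m := s / 2 ^ (n - t) with hm
  have hmul : m * 2 ^ (n - t) ≤ s := Nat.div_mul_le_self _ _
  have hpowsplit : 2 ^ (n - t) * 2 ^ t = 2 ^ n := by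
    rw [← pow_add, Nat.sub_add_cancel htn]
  have hmlt : m < 2 ^ t := by
    by_contra h
    push_neg at h
    have : 2 ^ n ≤ m * 2 ^ (n - t) := by
      calc 2 ^ n = 2 ^ (n - t) * 2 ^ t := hpowsplit.symm
        _ ≤ 2 ^ (n - t) * m := Nat.mul_le_mul_left _ h
        _ = m * 2 ^ (n - t) := Nat.mul_comm _ _
    have h1 : 2 ^ n ≤ s := le_trans this hmul
    have h2 : 2 ^ (n - 1) < 2 ^ n := Nat.pow_lt_pow_right (by norm_num) (by omega)
    omega
  -- card computation
  have hcard : (Finset.univ.filter (fun c : Fin (2 ^ t) =>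
      (c : ℕ) * 2 ^ (n - t) ≤ s)).card = m + 1 := by
    have heq : (Finset.univ.filter (fun c : Fin (2 ^ t) =>
        (c : ℕ) * 2 ^ (n - t) ≤ s)) = Finset.Iic (⟨m, hmlt⟩ : Fin (2 ^ t)) := by
      ext c
      simp only [Finset.mem_filter, Finset.mem_univ, true_and, Finset.mem_Iic, Fin.le_def]
      rw [hm, Nat.le_div_iff_mul_le h2nt]
    rw [heq, Fin.card_Iic]
  rw [hcard]
  -- real facts
  have h2t : (0:ℝ) < 2 ^ t := by positivity
  have h2n : (0:ℝ) < 2 ^ n := by positivity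
  have hsplitR : (2:ℝ) ^ (n - t) * 2 ^ t = 2 ^ n := by
    rw [← pow_add, Nat.sub_add_cancel htn]
  have hslt : (s:ℝ) < (m + 1) * 2 ^ (n - t) := by
    have : s < (m + 1) * 2 ^ (n - t) := (Nat.div_lt_iff_lt_mul h2nt).mp (Nat.lt_succ_self m)
    exact_mod_cast this
  have hmle : (m:ℝ) * 2 ^ (n - t) ≤ s := by exact_mod_cast hmul
  have hps : p * 2 ^ n ≤ s := Nat.le_ceil _
  have hεs : (1:ℝ) / 2 ^ t ≤ p * ε := by
    rw [div_le_iff₀ (by positivity)] at ht ⊢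
    nlinarith
  constructor
  · rw [div_le_div_iff₀ h2n h2t]
    push_cast
    nlinarith [mul_lt_mul_of_pos_right hslt h2t]
  · rw [div_le_div_iff₀ h2t h2n]
    have key : ((m:ℝ) + 1) * 2 ^ n = (m * 2 ^ (n - t)) * 2 ^ t + 2 ^ n := by
      rw [← hsplitR]; ring
    have h1 : ((m:ℝ) + 1) * 2 ^ n ≤ (s:ℝ) * 2 ^ t + 2 ^ n := by
      rw [key]; nlinarith
    have hone : (1:ℝ) ≤ p * ε * 2 ^ t := by
      rw [div_le_iff₀ (by positivity)] at ht
      linarith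
    have h2 : (2:ℝ) ^ n ≤ ε * s * 2 ^ t := by
      nlinarith [mul_nonneg (mul_nonneg hε.le h2t.le) (sub_nonneg.mpr hps),
        mul_le_mul_of_nonneg_right hone h2n.le]
    push_cast
    nlinarith
end

section
/- Let n ≥ 2, 1 ≤ l < n, and 0 < p < 1, and set p' = 2p(1−p). Let F be a random function from {0,1}^n to {0,1} on a probability space S such that the family of binary random variables (F(·)(x))_{x ∈ {0,1}^n} is 4-wise independent with P(F(·)(x) = 1) = p for every x. For α ∈ {0,1}^l, let F_α : {0,1}^{n−l} → {0,1} denote the subfunction obtained by fixing the first l input bits of F according to α. Then for any two distinct α, α' ∈ {0,1}^l, the probability that F_α = F_{α'} (as functions on {0,1}^{n−l}) is at most 1/(2^{n−l}·p'). -/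
open MeasureTheory

/-- `subInput n l α z` is the input in `{0,1}^n` whose first `l` bits are given
by `α` and whose remaining `n − l` bits are given by `z`. -/
def subInput (n l : ℕ) (α : Fin l → Bool) (z : Fin (n - l) → Bool) :
    Fin n → Bool :=
  fun i =>
    if h : (i : ℕ) < l then α ⟨i, h⟩
    else z ⟨(i : ℕ) - l, by have := i.isLt; omega⟩

lemma subInput_inj {n l : ℕ} (hln : l ≤ n) {a b : Fin l → Bool} {z w : Fin (n-l) → Bool}
    (h : subInput n l a z = subInput n l b w) : a = b ∧ z = w := by
  constructor
  · funext i
    have h2 := congrFun h ⟨(i:ℕ), lt_of_lt_of_le i.isLt hln⟩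
    simpa [subInput, i.isLt] using h2
  · funext j
    have hj : l + (j:ℕ) < n := by have := j.isLt; omega
    have h2 := congrFun h ⟨l + (j:ℕ), hj⟩
    have hnl : ¬ (l + (j:ℕ) < l) := by omega
    simpa [subInput, hnl, Nat.add_sub_cancel_left] using h2

set_option maxHeartbeats 1000000 in
/-- For a random function `F : {0,1}^n → {0,1}` whose values are
4-wise independent with one-probability `p`, and distinct `α, α' ∈ {0,1}^l`,
the probability that the subfunctions `F_α` and `F_{α'}` coincide is at most
`1/(2^{n−l}·p')` with `p' = 2p(1−p)`. -/
theorem stmt_8 {Ω : Type*} [MeasurableSpace Ω] (μ : Measure Ω)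
    [IsProbabilityMeasure μ]
    (n l : ℕ) (hn : 2 ≤ n) (hl : 1 ≤ l) (hln : l < n)
    (p : ℝ) (hp0 : 0 < p) (hp1 : p < 1)
    (F : Ω → (Fin n → Bool) → Bool)
    (hmeas : ∀ x, Measurable (fun s => F s x))
    (hbias : ∀ x, (μ {s | F s x = true}).toReal = p)
    (hind : ∀ x₁ x₂ x₃ x₄ : Fin n → Bool,
      x₁ ≠ x₂ → x₁ ≠ x₃ → x₁ ≠ x₄ → x₂ ≠ x₃ → x₂ ≠ x₄ → x₃ ≠ x₄ →
      ∀ l₁ l₂ l₃ l₄ : Bool,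
        (μ {s | F s x₁ = l₁ ∧ F s x₂ = l₂ ∧ F s x₃ = l₃ ∧ F s x₄ = l₄}).toReal =
          (μ {s | F s x₁ = l₁}).toReal * (μ {s | F s x₂ = l₂}).toReal *
          (μ {s | F s x₃ = l₃}).toReal * (μ {s | F s x₄ = l₄}).toReal)
    (α α' : Fin l → Bool) (hαα' : α ≠ α') :
    (μ {s | ∀ z : Fin (n - l) → Bool,
        F s (subInput n l α z) = F s (subInput n l α' z)}).toReal ≤
      1 / (2 ^ (n - l) * (2 * p * (1 - p))) := by
  classical
  have hμfin : ∀ S : Set Ω, μ S ≠ ⊤ := fun S => measure_ne_top μ S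
  set P : Bool → ℝ := fun b => if b = true then p else 1 - p with hPdef
  have hm1 : ∀ (x : Fin n → Bool) (b : Bool), MeasurableSet {s | F s x = b} :=
    fun x b => hmeas x (measurableSet_singleton b)
  have hP : ∀ x b, (μ {s | F s x = b}).toReal = P b := by
    intro x b
    cases b with
    | true => simpa [hPdef] using hbias x
    | false =>
        have hc : {s | F s x = false} = {s | F s x = true}ᶜ := by
          ext s; simp
        rw [hc, prob_compl_eq_one_sub (hm1 x true),
          ENNReal.toReal_sub_of_le prob_le_one ENNReal.one_ne_top]
        simp [hPdef, hbias x]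
  -- 4-point independence in intersection form
  have hquad : ∀ x₁ x₂ x₃ x₄ : Fin n → Bool, x₁ ≠ x₂ → x₁ ≠ x₃ → x₁ ≠ x₄ →
      x₂ ≠ x₃ → x₂ ≠ x₄ → x₃ ≠ x₄ → ∀ b₁ b₂ b₃ b₄ : Bool,
      (μ ({s | F s x₁ = b₁} ∩ {s | F s x₂ = b₂} ∩ {s | F s x₃ = b₃} ∩
        {s | F s x₄ = b₄})).toReal = P b₁ * P b₂ * P b₃ * P b₄ := by
    intro x₁ x₂ x₃ x₄ h12 h13 h14 h23 h24 h34 b₁ b₂ b₃ b₄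
    have hset : {s | F s x₁ = b₁} ∩ {s | F s x₂ = b₂} ∩ {s | F s x₃ = b₃} ∩
        {s | F s x₄ = b₄}
        = {s | F s x₁ = b₁ ∧ F s x₂ = b₂ ∧ F s x₃ = b₃ ∧ F s x₄ = b₄} := by
      ext s; simp [Set.mem_setOf_eq, and_assoc]
    rw [hset, hind x₁ x₂ x₃ x₄ h12 h13 h14 h23 h24 h34 b₁ b₂ b₃ b₄,
      hP x₁ b₁, hP x₂ b₂, hP x₃ b₃, hP x₄ b₄]
  -- splitting a measure along the value at a point
  have hsplit : ∀ (B : Set Ω), MeasurableSet B → ∀ y : Fin n → Bool,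
      (μ B).toReal = (μ (B ∩ {s | F s y = true})).toReal +
        (μ (B ∩ {s | F s y = false})).toReal := by
    intro B hB y
    have h1 : B ∩ {s | F s y = false} = B \ {s | F s y = true} := by
      ext s; simp [Set.mem_setOf_eq]
    rw [h1, ← ENNReal.toReal_add (hμfin _) (hμfin _),
      measure_inter_add_diff B (hm1 y true)]
  -- pairwise independence
  have hpair : ∀ x₁ x₂ : Fin n → Bool, x₁ ≠ x₂ → ∀ b₁ b₂ : Bool,
      (μ ({s | F s x₁ = b₁} ∩ {s | F s x₂ = b₂})).toReal = P b₁ * P b₂ := by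
    intro x₁ x₂ h12 b₁ b₂
    have hcard : 4 ≤ Fintype.card (Fin n → Bool) := by
      have hc : Fintype.card (Fin n → Bool) = 2 ^ n := by simp
      rw [hc]
      calc 4 = 2 ^ 2 := by norm_num
        _ ≤ 2 ^ n := Nat.pow_le_pow_right (by norm_num) hn
    have hscard : 1 < (({x₁, x₂}ᶜ : Finset (Fin n → Bool))).card := by
      have h2 : ({x₁, x₂} : Finset (Fin n → Bool)).card ≤ 2 :=
        (Finset.card_insert_le _ _).trans (by simp)
      rw [Finset.card_compl]; omega
    obtain ⟨x₃, hx₃, x₄, hx₄, h34⟩ := Finset.one_lt_card.mp hscard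
    simp only [Finset.mem_compl, Finset.mem_insert, Finset.mem_singleton,
      not_or] at hx₃ hx₄
    have h13 : x₁ ≠ x₃ := fun h => hx₃.1 h.symm
    have h14 : x₁ ≠ x₄ := fun h => hx₄.1 h.symm
    have h23 : x₂ ≠ x₃ := fun h => hx₃.2 h.symm
    have h24 : x₂ ≠ x₄ := fun h => hx₄.2 h.symm
    have hBmeas : MeasurableSet ({s | F s x₁ = b₁} ∩ {s | F s x₂ = b₂}) :=
      (hm1 _ _).inter (hm1 _ _)
    rw [hsplit _ hBmeas x₃,
      hsplit _ (hBmeas.inter (hm1 x₃ true)) x₄,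
      hsplit _ (hBmeas.inter (hm1 x₃ false)) x₄,
      hquad x₁ x₂ x₃ x₄ h12 h13 h14 h23 h24 h34 b₁ b₂ true true,
      hquad x₁ x₂ x₃ x₄ h12 h13 h14 h23 h24 h34 b₁ b₂ true false,
      hquad x₁ x₂ x₃ x₄ h12 h13 h14 h23 h24 h34 b₁ b₂ false true,
      hquad x₁ x₂ x₃ x₄ h12 h13 h14 h23 h24 h34 b₁ b₂ false false]
    cases b₁ <;> cases b₂ <;> simp only [hPdef] <;> norm_num <;> ring
  -- distinctness of subfunction inputs
  have hXne : ∀ (β₁ β₂ : Fin l → Bool) (z w : Fin (n-l) → Bool),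
      (β₁ ≠ β₂ ∨ z ≠ w) → subInput n l β₁ z ≠ subInput n l β₂ w := by
    intro β₁ β₂ z w hne h
    obtain ⟨h1, h2⟩ := subInput_inj (le_of_lt hln) h
    tauto
  -- the "disagreement at z" events
  set A : (Fin (n - l) → Bool) → Set Ω := fun z =>
    ({s | F s (subInput n l α z) = true} ∩ {s | F s (subInput n l α' z) = false}) ∪
    ({s | F s (subInput n l α z) = false} ∩ {s | F s (subInput n l α' z) = true})
      with hAdef
  have hAmeas : ∀ z, MeasurableSet (A z) := by
    intro z
    rw [hAdef]
    exact ((hm1 _ _).inter (hm1 _ _)).union ((hm1 _ _).inter (hm1 _ _))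
  have hAz : ∀ z, (μ (A z)).toReal = 2 * p * (1 - p) := by
    intro z
    rw [hAdef]
    have hdisj : Disjoint
        ({s | F s (subInput n l α z) = true} ∩ {s | F s (subInput n l α' z) = false})
        ({s | F s (subInput n l α z) = false} ∩ {s | F s (subInput n l α' z) = true}) := by
      rw [Set.disjoint_left]
      rintro s ⟨h1, h2⟩ ⟨h3, h4⟩
      simp only [Set.mem_setOf_eq] at h1 h3
      rw [h1] at h3
      exact Bool.noConfusion h3
    rw [measure_union hdisj ((hm1 _ _).inter (hm1 _ _)),
      ENNReal.toReal_add (hμfin _) (hμfin _),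
      hpair _ _ (hXne α α' z z (Or.inl hαα')) true false,
      hpair _ _ (hXne α α' z z (Or.inl hαα')) false true]
    simp only [hPdef]
    norm_num
    ring
  -- measure of pairwise intersections
  have hAzz : ∀ z w, z ≠ w → (μ (A z ∩ A w)).toReal = (2 * p * (1 - p))^2 := by
    intro z w hzw
    rw [hAdef]
    set x₁ := subInput n l α z with hx₁
    set x₂ := subInput n l α' z with hx₂
    set x₃ := subInput n l α w with hx₃
    set x₄ := subInput n l α' w with hx₄
    have h12 : x₁ ≠ x₂ := hXne _ _ _ _ (Or.inl hαα')
    have h13 : x₁ ≠ x₃ := hXne _ _ _ _ (Or.inr hzw)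
    have h14 : x₁ ≠ x₄ := hXne _ _ _ _ (Or.inl hαα')
    have h23 : x₂ ≠ x₃ := hXne _ _ _ _ (Or.inl (Ne.symm hαα'))
    have h24 : x₂ ≠ x₄ := hXne _ _ _ _ (Or.inr hzw)
    have h34 : x₃ ≠ x₄ := hXne _ _ _ _ (Or.inl hαα')
    have hexp : (({s | F s x₁ = true} ∩ {s | F s x₂ = false}) ∪
          ({s | F s x₁ = false} ∩ {s | F s x₂ = true})) ∩
        (({s | F s x₃ = true} ∩ {s | F s x₄ = false}) ∪
          ({s | F s x₃ = false} ∩ {s | F s x₄ = true})) =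
        ({s | F s x₁ = true} ∩ {s | F s x₂ = false} ∩ {s | F s x₃ = true} ∩ {s | F s x₄ = false}) ∪
        ({s | F s x₁ = true} ∩ {s | F s x₂ = false} ∩ {s | F s x₃ = false} ∩ {s | F s x₄ = true}) ∪
        ({s | F s x₁ = false} ∩ {s | F s x₂ = true} ∩ {s | F s x₃ = true} ∩ {s | F s x₄ = false}) ∪
        ({s | F s x₁ = false} ∩ {s | F s x₂ = true} ∩ {s | F s x₃ = false} ∩ {s | F s x₄ = true}) := by
      ext s
      simp only [Set.mem_union, Set.mem_inter_iff, Set.mem_setOf_eq]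
      tauto
    have hW : ∀ c₁ c₂ c₃ c₄ : Bool, MeasurableSet
        ({s | F s x₁ = c₁} ∩ {s | F s x₂ = c₂} ∩ {s | F s x₃ = c₃} ∩ {s | F s x₄ = c₄}) :=
      fun c₁ c₂ c₃ c₄ => (((hm1 _ _).inter (hm1 _ _)).inter (hm1 _ _)).inter (hm1 _ _)
    have hdisjW : ∀ c₁ c₂ c₃ c₄ c₁' c₂' c₃' c₄' : Bool, (c₁ ≠ c₁' ∨ c₃ ≠ c₃') →
        Disjoint
          ({s | F s x₁ = c₁} ∩ {s | F s x₂ = c₂} ∩ {s | F s x₃ = c₃} ∩ {s | F s x₄ = c₄})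
          ({s | F s x₁ = c₁'} ∩ {s | F s x₂ = c₂'} ∩ {s | F s x₃ = c₃'} ∩ {s | F s x₄ = c₄'}) := by
      intro c₁ c₂ c₃ c₄ c₁' c₂' c₃' c₄' hne
      rw [Set.disjoint_left]
      rintro s ⟨⟨⟨h1, h2⟩, h3⟩, h4⟩ ⟨⟨⟨h5, h6⟩, h7⟩, h8⟩
      simp only [Set.mem_setOf_eq] at h1 h3 h5 h7
      rcases hne with h | h
      · exact h (h1.symm.trans h5)
      · exact h (h3.symm.trans h7)
    rw [hexp,
      measure_union (Set.disjoint_union_left.mpr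
        ⟨Set.disjoint_union_left.mpr
          ⟨hdisjW _ _ _ _ _ _ _ _ (Or.inl (by simp)),
           hdisjW _ _ _ _ _ _ _ _ (Or.inl (by simp))⟩,
         hdisjW _ _ _ _ _ _ _ _ (Or.inr (by simp))⟩) (hW _ _ _ _),
      measure_union (Set.disjoint_union_left.mpr
        ⟨hdisjW _ _ _ _ _ _ _ _ (Or.inl (by simp)),
         hdisjW _ _ _ _ _ _ _ _ (Or.inl (by simp))⟩) (hW _ _ _ _),
      measure_union (hdisjW _ _ _ _ _ _ _ _ (Or.inr (by simp))) (hW _ _ _ _),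
      ENNReal.toReal_add (ENNReal.add_ne_top.mpr
        ⟨ENNReal.add_ne_top.mpr ⟨hμfin _, hμfin _⟩, hμfin _⟩) (hμfin _),
      ENNReal.toReal_add (ENNReal.add_ne_top.mpr ⟨hμfin _, hμfin _⟩) (hμfin _),
      ENNReal.toReal_add (hμfin _) (hμfin _),
      hquad x₁ x₂ x₃ x₄ h12 h13 h14 h23 h24 h34 true false true false,
      hquad x₁ x₂ x₃ x₄ h12 h13 h14 h23 h24 h34 true false false true,
      hquad x₁ x₂ x₃ x₄ h12 h13 h14 h23 h24 h34 false true true false,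
      hquad x₁ x₂ x₃ x₄ h12 h13 h14 h23 h24 h34 false true false true]
    simp only [hPdef]
    norm_num
    ring

  -- abbreviations
  set p' : ℝ := 2 * p * (1 - p) with hp'def
  set m : ℝ := (2:ℝ) ^ (n - l) with hmdef
  have hp'pos : 0 < p' := by rw [hp'def]; nlinarith
  have hmpos : 0 < m := by rw [hmdef]; positivity
  have hcardβ : (Fintype.card (Fin (n-l) → Bool) : ℝ) = m := by
    rw [hmdef]; simp
  -- the counting function Y
  set Y : Ω → ℝ := fun s => ∑ z : Fin (n-l) → Bool, (A z).indicator (1 : Ω → ℝ) s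
    with hYdef
  have hYint : Integrable Y μ := by
    rw [hYdef]
    exact integrable_finset_sum _
      (fun z _ => (integrable_const 1).indicator (hAmeas z))
  have hEY : ∫ s, Y s ∂μ = m * p' := by
    have h1 : ∫ s, (∑ z : Fin (n-l) → Bool, (A z).indicator (1 : Ω → ℝ) s) ∂μ
        = ∑ z : Fin (n-l) → Bool, ∫ s, (A z).indicator (1 : Ω → ℝ) s ∂μ :=
      integral_finset_sum _
        (fun z _ => (integrable_const 1).indicator (hAmeas z))
    have h2 : ∀ z : Fin (n-l) → Bool,
        ∫ s, (A z).indicator (1 : Ω → ℝ) s ∂μ = p' :=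
      fun z => (integral_indicator_one (hAmeas z)).trans (hAz z)
    simp only [hYdef]
    rw [h1, Finset.sum_congr rfl (fun z _ => h2 z), Finset.sum_const,
      Finset.card_univ, nsmul_eq_mul, hcardβ]
  have hY2 : ∀ s, (Y s)^2 = ∑ z : Fin (n-l) → Bool, ∑ w : Fin (n-l) → Bool,
      ((A z ∩ A w).indicator (1 : Ω → ℝ)) s := by
    intro s
    simp only [hYdef, sq, Finset.sum_mul_sum]
    refine Finset.sum_congr rfl fun z _ => Finset.sum_congr rfl fun w _ => ?_
    exact (congrFun Set.inter_indicator_one s).symm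
  have hY2int : Integrable (fun s => (Y s)^2) μ := by
    have heq2 : (fun s => (Y s)^2) = fun s => ∑ z : Fin (n-l) → Bool,
        ∑ w : Fin (n-l) → Bool, ((A z ∩ A w).indicator (1 : Ω → ℝ)) s :=
      funext hY2
    rw [heq2]
    exact integrable_finset_sum _ fun z _ => integrable_finset_sum _
      fun w _ => (integrable_const 1).indicator ((hAmeas z).inter (hAmeas w))
  have h1le : 1 ≤ Fintype.card (Fin (n-l) → Bool) := Fintype.card_pos
  have hEY2 : ∫ s, (Y s)^2 ∂μ = m * p' + m * (m-1) * p'^2 := by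
    calc ∫ s, (Y s)^2 ∂μ
        = ∫ s, ∑ z : Fin (n-l) → Bool, ∑ w : Fin (n-l) → Bool,
            ((A z ∩ A w).indicator (1 : Ω → ℝ)) s ∂μ := by
          exact integral_congr_ae (Filter.Eventually.of_forall fun s => hY2 s)
      _ = ∑ z : Fin (n-l) → Bool, ∑ w : Fin (n-l) → Bool,
            (μ (A z ∩ A w)).toReal := by
          have h1 : ∫ s, (∑ z : Fin (n-l) → Bool, ∑ w : Fin (n-l) → Bool,
              ((A z ∩ A w).indicator (1 : Ω → ℝ)) s) ∂μ
              = ∑ z : Fin (n-l) → Bool, ∫ s, (∑ w : Fin (n-l) → Bool,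
                ((A z ∩ A w).indicator (1 : Ω → ℝ)) s) ∂μ :=
            integral_finset_sum _ (fun z _ => integrable_finset_sum _
              (fun w _ => (integrable_const 1).indicator
                ((hAmeas z).inter (hAmeas w))))
          rw [h1]
          refine Finset.sum_congr rfl fun z _ => ?_
          have h2 : ∫ s, (∑ w : Fin (n-l) → Bool,
              ((A z ∩ A w).indicator (1 : Ω → ℝ)) s) ∂μ
              = ∑ w : Fin (n-l) → Bool,
                ∫ s, ((A z ∩ A w).indicator (1 : Ω → ℝ)) s ∂μ :=
            integral_finset_sum _ (fun w _ => (integrable_const 1).indicator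
              ((hAmeas z).inter (hAmeas w)))
          rw [h2]
          exact Finset.sum_congr rfl fun w _ =>
            integral_indicator_one ((hAmeas z).inter (hAmeas w))
      _ = ∑ z : Fin (n-l) → Bool, ((μ (A z ∩ A z)).toReal +
            ∑ w ∈ Finset.univ.erase z, (μ (A z ∩ A w)).toReal) :=
          Finset.sum_congr rfl fun z _ =>
            (Finset.add_sum_erase _ _ (Finset.mem_univ z)).symm
      _ = ∑ z : Fin (n-l) → Bool, (p' + (m - 1) * p'^2) := by
          refine Finset.sum_congr rfl fun z _ => ?_
          rw [Set.inter_self, hAz z]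
          congr 1
          rw [Finset.sum_congr rfl
            (fun w hw => hAzz z w (Finset.ne_of_mem_erase hw).symm)]
          rw [Finset.sum_const, Finset.card_erase_of_mem (Finset.mem_univ z),
            Finset.card_univ, nsmul_eq_mul, Nat.cast_sub h1le, hcardβ,
            Nat.cast_one]
      _ = m * p' + m * (m-1) * p'^2 := by
          rw [Finset.sum_const, Finset.card_univ, nsmul_eq_mul, hcardβ]; ring
  -- the target event
  set T : Set Ω := {s | ∀ z : Fin (n - l) → Bool,
      F s (subInput n l α z) = F s (subInput n l α' z)} with hTdef
  have hTmeas : MeasurableSet T := by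
    have hTeq : T = ⋂ z : Fin (n-l) → Bool,
        (({s | F s (subInput n l α z) = true} ∩
          {s | F s (subInput n l α' z) = true}) ∪
         ({s | F s (subInput n l α z) = false} ∩
          {s | F s (subInput n l α' z) = false})) := by
      rw [hTdef]; ext s
      simp only [Set.mem_setOf_eq, Set.mem_iInter, Set.mem_union,
        Set.mem_inter_iff]
      constructor
      · intro h z
        rw [h z]
        cases F s (subInput n l α' z) <;> simp
      · intro h z
        rcases h z with ⟨h1, h2⟩ | ⟨h1, h2⟩ <;> rw [h1, h2]
    rw [hTeq]
    exact MeasurableSet.iInter fun z =>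
      ((hm1 _ _).inter (hm1 _ _)).union ((hm1 _ _).inter (hm1 _ _))
  have hY0 : ∀ s ∈ T, Y s = 0 := by
    intro s hs
    have hs' : ∀ z : Fin (n-l) → Bool,
        F s (subInput n l α z) = F s (subInput n l α' z) := hs
    simp only [hYdef]
    refine Finset.sum_eq_zero fun z _ => ?_
    refine Set.indicator_of_notMem ?_ _
    rw [hAdef]
    rintro (⟨h1, h2⟩ | ⟨h1, h2⟩) <;>
      simp only [Set.mem_setOf_eq] at h1 h2 <;>
      rw [hs' z, h2] at h1 <;> exact Bool.noConfusion h1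
  -- Chebyshev-type second moment bound
  set t : ℝ := m * p' with htdef
  have htpos : 0 < t := mul_pos hmpos hp'pos
  have hG : Integrable (fun s => (Y s - t)^2) μ := by
    have heq : (fun s => (Y s - t)^2)
        = fun s => ((Y s)^2 - (2*t) * Y s + t^2) := by
      funext s; ring
    rw [heq]
    exact (hY2int.sub (hYint.const_mul (2*t))).add (integrable_const _)
  have hintval : ∫ s, (Y s - t)^2 ∂μ = m * p' - m * p'^2 := by
    have heq : (fun s => (Y s - t)^2)
        = fun s => ((Y s)^2 - (2*t) * Y s + t^2) := by
      funext s; ring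
    have hsubint : Integrable (fun s => Y s ^ 2 - 2 * t * Y s) μ :=
      hY2int.sub (hYint.const_mul (2*t))
    rw [heq, integral_add hsubint (integrable_const _),
      integral_sub hY2int (hYint.const_mul (2*t)),
      MeasureTheory.integral_const_mul, integral_const, hEY2, hEY]
    simp only [measure_univ, ENNReal.toReal_one, smul_eq_mul, one_mul, probReal_univ, mul_one]
    rw [htdef]; ring
  have key : (μ T).toReal * t^2 ≤ m * p' - m * p'^2 := by
    rw [← hintval]
    have hle : ∀ s, T.indicator (fun _ => t^2) s ≤ (Y s - t)^2 := by
      intro s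
      by_cases hs : s ∈ T
      · rw [Set.indicator_of_mem hs, hY0 s hs, zero_sub, neg_sq]
      · rw [Set.indicator_of_notMem hs]; positivity
    have hmono := integral_mono ((integrable_const (t^2)).indicator hTmeas)
      hG hle
    rwa [integral_indicator_const _ hTmeas, smul_eq_mul] at hmono
  have hfinal : (μ T).toReal ≤ 1 / t := by
    rw [le_div_iff₀ htpos]
    have h2 : (μ T).toReal * t^2 ≤ t := by
      refine key.trans ?_
      rw [htdef]
      nlinarith [mul_nonneg hmpos.le (sq_nonneg p')]
    nlinarith [h2, htpos]
  refine hfinal.trans (le_of_eq ?_)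
  rw [htdef, hmdef, hp'def]
end

section
/- Let n ≥ 2, 1 ≤ l < n, and 0 < p < 1, and set p' = 2p(1−p). Let F be a random function from {0,1}^n to {0,1} on a probability space S such that the family (F(·)(x))_{x ∈ {0,1}^n} is 4-wise independent with P(F(·)(x) = 1) = p for every x. For α ∈ {0,1}^l, let F_α : {0,1}^{n−l} → {0,1} denote the subfunction obtained by fixing the first l input bits of F according to α. Then the expected number of unordered pairs {α, α'} of distinct elements of {0,1}^l with F_α = F_{α'} is at most 2^{2l−1}/(2^{n−l}·p'). -/
open MeasureTheory

namespace Stmt9Aux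

lemma exists_notMem {α : Type*} [Fintype α] [DecidableEq α] (s : Finset α)
    (h : s.card < Fintype.card α) : ∃ a, a ∉ s := by
  by_contra hc; push_neg at hc
  have : s = Finset.univ := Finset.eq_univ_iff_forall.mpr hc
  simp only [this, Finset.card_univ] at h
  exact lt_irrefl _ h

lemma subInput_inj {n l : ℕ} (hln : l ≤ n) {α α' : Fin l → Bool}
    {z z' : Fin (n - l) → Bool} (h : subInput n l α z = subInput n l α' z') :
    α = α' ∧ z = z' := by
  constructor
  · funext i
    have hi : (i : ℕ) < n := lt_of_lt_of_le i.isLt hln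
    have := congrFun h ⟨i, hi⟩
    simpa [subInput, i.isLt] using this
  · funext j
    have hj : l + (j : ℕ) < n := by have := j.isLt; omega
    have := congrFun h ⟨l + j, hj⟩
    have hnlt : ¬ (l + (j : ℕ) < l) := by omega
    simpa [subInput, hnlt, Nat.add_sub_cancel_left] using this

variable {Ω : Type*} [MeasurableSpace Ω]

lemma integral_boole (μ : Measure Ω) [IsProbabilityMeasure μ]
    (P : Ω → Prop) [DecidablePred P] (hB : MeasurableSet {s | P s}) :
    ∫ s, (if P s then (1:ℝ) else 0) ∂μ = (μ {s | P s}).toReal := by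
  have h : (fun s => if P s then (1:ℝ) else 0)
      = Set.indicator {s | P s} (fun _ => (1:ℝ)) := by
    funext s; by_cases hs : P s <;> simp [Set.indicator, hs]
  rw [h, integral_indicator_const _ hB]; simp; rfl

lemma integrable_boole (μ : Measure Ω) [IsProbabilityMeasure μ]
    (P : Ω → Prop) [DecidablePred P] (hB : MeasurableSet {s | P s}) :
    Integrable (fun s => if P s then (1:ℝ) else 0) μ := by
  have h : (fun s => if P s then (1:ℝ) else 0)
      = Set.indicator {s | P s} (fun _ => (1:ℝ)) := by
    funext s; by_cases hs : P s <;> simp [Set.indicator, hs]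
  rw [h]; exact (integrable_const 1).indicator hB

variable {n : ℕ} {F : Ω → (Fin n → Bool) → Bool} {p : ℝ}

lemma measurable_val (hmeas : ∀ x, Measurable (fun s => F s x))
    (x : Fin n → Bool) (b : Bool) : MeasurableSet {s | F s x = b} := by
  have := (hmeas x) (MeasurableSet.singleton b)
  simpa [Set.preimage, Set.mem_singleton_iff] using this

lemma prob_val (μ : Measure Ω) [IsProbabilityMeasure μ]
    (hmeas : ∀ x, Measurable (fun s => F s x))
    (hbias : ∀ x, (μ {s | F s x = true}).toReal = p)
    (x : Fin n → Bool) (b : Bool) :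
    (μ {s | F s x = b}).toReal = if b then p else 1 - p := by
  cases b
  · have hc : {s | F s x = false} = {s | F s x = true}ᶜ := by
      ext s; simp
    rw [hc, prob_compl_eq_one_sub (measurable_val hmeas x true)]
    rw [ENNReal.toReal_sub_of_le prob_le_one (by simp), hbias x]
    simp
  · simpa using hbias x

lemma split_measure (μ : Measure Ω) [IsProbabilityMeasure μ]
    (hmeas : ∀ x, Measurable (fun s => F s x))
    (A : Set Ω) (x : Fin n → Bool) :
    (μ A).toReal
      = (μ (A ∩ {s | F s x = true})).toReal + (μ (A ∩ {s | F s x = false})).toReal := by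
  have h1 : A ∩ {s | F s x = false} = A \ {s | F s x = true} := by
    ext s; simp [Set.mem_diff]
  rw [h1, ← ENNReal.toReal_add (measure_ne_top _ _) (measure_ne_top _ _),
    measure_inter_add_diff A (measurable_val hmeas x true)]
variable (μ : Measure Ω) [IsProbabilityMeasure μ]
variable (hmeas : ∀ x, Measurable (fun s => F s x))
  (hbias : ∀ x, (μ {s | F s x = true}).toReal = p)
  (hn4 : 4 ≤ Fintype.card (Fin n → Bool))
  (hind : ∀ x₁ x₂ x₃ x₄ : Fin n → Bool,
      x₁ ≠ x₂ → x₁ ≠ x₃ → x₁ ≠ x₄ → x₂ ≠ x₃ → x₂ ≠ x₄ → x₃ ≠ x₄ →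
      ∀ l₁ l₂ l₃ l₄ : Bool,
        (μ {s | F s x₁ = l₁ ∧ F s x₂ = l₂ ∧ F s x₃ = l₃ ∧ F s x₄ = l₄}).toReal =
          (μ {s | F s x₁ = l₁}).toReal * (μ {s | F s x₂ = l₂}).toReal *
          (μ {s | F s x₃ = l₃}).toReal * (μ {s | F s x₄ = l₄}).toReal)

include hmeas hbias hn4 hind in
lemma ind3 (x₁ x₂ x₃ : Fin n → Bool) (h12 : x₁ ≠ x₂) (h13 : x₁ ≠ x₃) (h23 : x₂ ≠ x₃)
    (l₁ l₂ l₃ : Bool) :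
    (μ {s | F s x₁ = l₁ ∧ F s x₂ = l₂ ∧ F s x₃ = l₃}).toReal =
      (μ {s | F s x₁ = l₁}).toReal * (μ {s | F s x₂ = l₂}).toReal *
      (μ {s | F s x₃ = l₃}).toReal := by
  have hcard : ({x₁, x₂, x₃} : Finset _).card < Fintype.card (Fin n → Bool) := by
    have h1 : ({x₁, x₂, x₃} : Finset _).card ≤ 3 := by
      refine le_trans (Finset.card_insert_le _ _) ?_
      have h2 : ({x₂, x₃} : Finset (Fin n → Bool)).card ≤ 2 :=
        le_trans (Finset.card_insert_le _ _) (by simp)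
      omega
    omega
  obtain ⟨x₄, hx₄⟩ := exists_notMem _ hcard
  simp only [Finset.mem_insert, Finset.mem_singleton, not_or] at hx₄
  have h14 : x₁ ≠ x₄ := fun h => hx₄.1 h.symm
  have h24 : x₂ ≠ x₄ := fun h => hx₄.2.1 h.symm
  have h34 : x₃ ≠ x₄ := fun h => hx₄.2.2 h.symm
  rw [split_measure μ hmeas _ x₄]
  have e : ∀ b, {s | F s x₁ = l₁ ∧ F s x₂ = l₂ ∧ F s x₃ = l₃} ∩ {s | F s x₄ = b}
      = {s | F s x₁ = l₁ ∧ F s x₂ = l₂ ∧ F s x₃ = l₃ ∧ F s x₄ = b} := by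
    intro b; ext s; simp [Set.mem_inter_iff]; tauto
  rw [e true, e false, hind x₁ x₂ x₃ x₄ h12 h13 h14 h23 h24 h34,
    hind x₁ x₂ x₃ x₄ h12 h13 h14 h23 h24 h34,
    prob_val μ hmeas hbias x₄ true, prob_val μ hmeas hbias x₄ false]
  norm_num
  ring

include hmeas hbias hn4 hind in
lemma ind2 (x₁ x₂ : Fin n → Bool) (h12 : x₁ ≠ x₂) (l₁ l₂ : Bool) :
    (μ {s | F s x₁ = l₁ ∧ F s x₂ = l₂}).toReal =
      (μ {s | F s x₁ = l₁}).toReal * (μ {s | F s x₂ = l₂}).toReal := by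
  have hcard : ({x₁, x₂} : Finset _).card < Fintype.card (Fin n → Bool) := by
    have h1 : ({x₁, x₂} : Finset (Fin n → Bool)).card ≤ 2 :=
      le_trans (Finset.card_insert_le _ _) (by simp)
    omega
  obtain ⟨x₃, hx₃⟩ := exists_notMem _ hcard
  simp only [Finset.mem_insert, Finset.mem_singleton, not_or] at hx₃
  have h13 : x₁ ≠ x₃ := fun h => hx₃.1 h.symm
  have h23 : x₂ ≠ x₃ := fun h => hx₃.2 h.symm
  rw [split_measure μ hmeas _ x₃]
  have e : ∀ b, {s | F s x₁ = l₁ ∧ F s x₂ = l₂} ∩ {s | F s x₃ = b}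
      = {s | F s x₁ = l₁ ∧ F s x₂ = l₂ ∧ F s x₃ = b} := by
    intro b; ext s; simp [Set.mem_inter_iff]; tauto
  rw [e true, e false, ind3 μ hmeas hbias hn4 hind x₁ x₂ x₃ h12 h13 h23,
    ind3 μ hmeas hbias hn4 hind x₁ x₂ x₃ h12 h13 h23,
    prob_val μ hmeas hbias x₃ true, prob_val μ hmeas hbias x₃ false]
  norm_num
  ring

include hmeas hbias hn4 hind in
lemma agree1 (x y : Fin n → Bool) (hxy : x ≠ y) :
    (μ {s | F s x = F s y}).toReal = p^2 + (1-p)^2 := by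
  rw [split_measure μ hmeas _ x]
  have e : ∀ b, {s | F s x = F s y} ∩ {s | F s x = b}
      = {s | F s x = b ∧ F s y = b} := by
    intro b; ext s
    simp only [Set.mem_inter_iff, Set.mem_setOf_eq]
    cases hx : F s x <;> cases hy : F s y <;> cases b <;> simp [hx, hy]
  rw [e true, e false, ind2 μ hmeas hbias hn4 hind x y hxy,
    ind2 μ hmeas hbias hn4 hind x y hxy,
    prob_val μ hmeas hbias x true, prob_val μ hmeas hbias y true,
    prob_val μ hmeas hbias x false, prob_val μ hmeas hbias y false]
  norm_num
  ring

include hmeas hbias hn4 hind in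
lemma agree2 (x y x' y' : Fin n → Bool)
    (h1 : x ≠ y) (h2 : x ≠ x') (h3 : x ≠ y') (h4 : y ≠ x') (h5 : y ≠ y') (h6 : x' ≠ y') :
    (μ {s | F s x = F s y ∧ F s x' = F s y'}).toReal = (p^2 + (1-p)^2)^2 := by
  rw [split_measure μ hmeas _ x]
  have e : ∀ b, {s | F s x = F s y ∧ F s x' = F s y'} ∩ {s | F s x = b}
      = {s | (F s x = b ∧ F s y = b) ∧ F s x' = F s y'} := by
    intro b; ext s
    simp only [Set.mem_inter_iff, Set.mem_setOf_eq]
    cases hx : F s x <;> cases hy : F s y <;> cases b <;> simp [hx, hy]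
  rw [e true, e false]
  rw [split_measure μ hmeas {s | (F s x = true ∧ F s y = true) ∧ F s x' = F s y'} x',
      split_measure μ hmeas {s | (F s x = false ∧ F s y = false) ∧ F s x' = F s y'} x']
  have e2 : ∀ b c, {s | (F s x = b ∧ F s y = b) ∧ F s x' = F s y'} ∩ {s | F s x' = c}
      = {s | F s x = b ∧ F s y = b ∧ F s x' = c ∧ F s y' = c} := by
    intro b c; ext s
    simp only [Set.mem_inter_iff, Set.mem_setOf_eq]
    cases hx : F s x' <;> cases hy : F s y' <;> cases b <;> cases c <;> simp [hx, hy]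
  rw [e2 true true, e2 true false, e2 false true, e2 false false,
    hind x y x' y' h1 h2 h3 h4 h5 h6,
    hind x y x' y' h1 h2 h3 h4 h5 h6,
    hind x y x' y' h1 h2 h3 h4 h5 h6,
    hind x y x' y' h1 h2 h3 h4 h5 h6,
    prob_val μ hmeas hbias x true, prob_val μ hmeas hbias y true,
    prob_val μ hmeas hbias x false, prob_val μ hmeas hbias y false,
    prob_val μ hmeas hbias x' true, prob_val μ hmeas hbias y' true,
    prob_val μ hmeas hbias x' false, prob_val μ hmeas hbias y' false]
  norm_num
  ring

include hmeas in
lemma measurable_agree (a b : Fin n → Bool) : MeasurableSet {s | F s a = F s b} := by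
  have h : {s | F s a = F s b}
      = ({s | F s a = true} ∩ {s | F s b = true})
        ∪ ({s | F s a = false} ∩ {s | F s b = false}) := by
    ext s; cases ha : F s a <;> cases hb : F s b <;> simp [ha, hb]
  rw [h]
  exact ((measurable_val hmeas a true).inter (measurable_val hmeas b true)).union
    ((measurable_val hmeas a false).inter (measurable_val hmeas b false))

include hmeas in
lemma measurable_agree2 (a b a' b' : Fin n → Bool) :
    MeasurableSet {s | F s a = F s b ∧ F s a' = F s b'} := by
  rw [Set.setOf_and]
  exact (measurable_agree hmeas a b).inter (measurable_agree hmeas a' b')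

include hmeas in
lemma measurable_forall_agree {ι : Type*} [Countable ι] (g h : ι → (Fin n → Bool)) :
    MeasurableSet {s | ∀ z, F s (g z) = F s (h z)} := by
  rw [Set.setOf_forall]
  exact MeasurableSet.iInter (fun z => measurable_agree hmeas (g z) (h z))

include hmeas hbias hn4 hind in
lemma pair_bound (hp0 : 0 < p) (hp1 : p < 1) (l : ℕ) (hln : l ≤ n)
    (α α' : Fin l → Bool) (hαα' : α ≠ α') :
    (μ {s | ∀ z, F s (subInput n l α z) = F s (subInput n l α' z)}).toReal
      ≤ 1 / ((2:ℝ)^(n-l) * (2*p*(1-p))) := by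
  classical
  set q : ℝ := p^2 + (1-p)^2 with hq_def
  set Z := (Fin (n - l) → Bool)
  set xa : Z → (Fin n → Bool) := fun z => subInput n l α z with hxa
  set xb : Z → (Fin n → Bool) := fun z => subInput n l α' z with hxb
  -- distinctness
  have hdist : ∀ z z' : Z, xa z = xa z' → z = z' := fun z z' h => (subInput_inj hln h).2
  have hdistb : ∀ z z' : Z, xb z = xb z' → z = z' := fun z z' h => (subInput_inj hln h).2
  have hab : ∀ z z' : Z, xa z ≠ xb z' := by
    intro z z' h
    exact hαα' (subInput_inj hln h).1
  set c : ℕ := Fintype.card Z with hc_def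
  have hc1 : 1 ≤ c := Fintype.card_pos
  set M : ℝ := (c : ℝ) with hM_def
  have hM1 : 1 ≤ M := Nat.one_le_cast.mpr hc1
  have hM0 : 0 < M := lt_of_lt_of_le one_pos hM1
  set Y : Ω → Z → ℝ := fun s z => if F s (xa z) = F s (xb z) then (1:ℝ) else 0 with hY
  -- integrability facts
  have hYint : ∀ z, Integrable (fun s => Y s z) μ := by
    intro z
    exact integrable_boole μ (fun s => F s (xa z) = F s (xb z))
      (measurable_agree hmeas (xa z) (xb z))
  have hYYfun : ∀ z z', (fun s => Y s z * Y s z')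
      = fun s => if (F s (xa z) = F s (xb z) ∧ F s (xa z') = F s (xb z')) then (1:ℝ) else 0 := by
    intro z z'; funext s
    simp only [hY]
    by_cases h1 : F s (xa z) = F s (xb z) <;> by_cases h2 : F s (xa z') = F s (xb z')
      <;> simp [h1, h2]
  have hYYint : ∀ z z', Integrable (fun s => Y s z * Y s z') μ := by
    intro z z'
    rw [hYYfun]
    exact integrable_boole μ _ (measurable_agree2 hmeas (xa z) (xb z) (xa z') (xb z'))
  -- expectations
  have hEY : ∀ z, ∫ s, Y s z ∂μ = q := by
    intro z
    rw [hY]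
    rw [integral_boole μ (fun s => F s (xa z) = F s (xb z))
      (measurable_agree hmeas (xa z) (xb z))]
    exact agree1 μ hmeas hbias hn4 hind _ _ (hab z z)
  have hEYY : ∀ z z', z ≠ z' → ∫ s, Y s z * Y s z' ∂μ = q^2 := by
    intro z z' hzz'
    rw [hYYfun]
    rw [integral_boole μ _ (measurable_agree2 hmeas (xa z) (xb z) (xa z') (xb z'))]
    refine agree2 μ hmeas hbias hn4 hind _ _ _ _ (hab z z) ?_ (hab z z')
      (fun h => hab z' z h.symm) ?_ (hab z' z')
    · exact fun h => hzz' (hdist z z' h)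
    · exact fun h => hzz' (hdistb z z' h)
  have hYY_diag : ∀ z, (fun s => Y s z * Y s z) = fun s => Y s z := by
    intro z; funext s; rw [hY]; by_cases h : F s (xa z) = F s (xb z) <;> simp [h]
  set T : Ω → ℝ := fun s => ∑ z : Z, Y s z with hTdef
  have hTint : Integrable T μ := integrable_finset_sum _ (fun z _ => hYint z)
  have hET : ∫ s, T s ∂μ = M * q := by
    rw [hTdef]
    rw [integral_finset_sum _ (fun z _ => hYint z)]
    simp only [hEY]
    rw [Finset.sum_const, Finset.card_univ]
    simp [hM_def, hc_def, mul_comm]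
  have hT2fun : (fun s => T s ^ 2) = fun s => ∑ z : Z, ∑ z' : Z, Y s z * Y s z' := by
    funext s
    rw [hTdef, sq, Finset.sum_mul_sum]
  have hT2int : Integrable (fun s => T s ^ 2) μ := by
    rw [hT2fun]
    exact integrable_finset_sum _ (fun z _ => integrable_finset_sum _ (fun z' _ => hYYint z z'))
  have hET2 : ∫ s, T s ^ 2 ∂μ = M * q + M * (M - 1) * q^2 := by
    rw [hT2fun, integral_finset_sum _ (fun z _ => integrable_finset_sum _ (fun z' _ => hYYint z z')),
      Finset.sum_congr rfl (fun z _ => integral_finset_sum Finset.univ (fun z' _ => hYYint z z'))]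
    have hinner : ∀ z : Z, ∑ z' : Z, ∫ s, Y s z * Y s z' ∂μ = q + (M - 1) * q^2 := by
      intro z
      rw [← Finset.add_sum_erase _ _ (Finset.mem_univ z)]
      have hrest : ∑ z' ∈ Finset.univ.erase z, ∫ s, Y s z * Y s z' ∂μ
          = (M - 1) * q^2 := by
        rw [Finset.sum_congr rfl (fun z' hz' => hEYY z z' (Ne.symm (Finset.ne_of_mem_erase hz')))]
        rw [Finset.sum_const, Finset.card_erase_of_mem (Finset.mem_univ z), Finset.card_univ]
        rw [nsmul_eq_mul]
        congr 1
        rw [hM_def]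
        rw [Nat.cast_sub (show 1 ≤ Fintype.card Z from hc1), ← hc_def]
        push_cast
        ring
      rw [hrest]
      congr 1
      rw [hYY_diag, hEY]
    rw [Finset.sum_congr rfl (fun z _ => hinner z), Finset.sum_const, Finset.card_univ,
      nsmul_eq_mul, ← hc_def, ← hM_def]
    ring
  -- variance computation
  have hvar : ∫ s, (T s - q * M)^2 ∂μ = M * q * (1 - q) := by
    have hfun : (fun s => (T s - q * M)^2)
        = fun s => (T s ^ 2 - (2*q*M) * T s) + (q*M)^2 := by
      funext s; ring
    have h1 : ∫ s, ((T s ^ 2 - (2*q*M) * T s) + (q*M)^2) ∂μ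
        = (∫ s, (T s ^ 2 - (2*q*M) * T s) ∂μ) + ∫ _s, ((q*M)^2 : ℝ) ∂μ :=
      integral_add (hT2int.sub (hTint.const_mul _)) (integrable_const _)
    have h2 : ∫ s, (T s ^ 2 - (2*q*M) * T s) ∂μ
        = (∫ s, T s ^ 2 ∂μ) - ∫ s, (2*q*M) * T s ∂μ :=
      integral_sub hT2int (hTint.const_mul _)
    have h3 : ∫ s, (2*q*M) * T s ∂μ = (2*q*M) * ∫ s, T s ∂μ := integral_const_mul _ _
    rw [hfun, h1, h2, h3, hET, hET2, integral_const]
    simp only [measure_univ, ENNReal.toReal_one, smul_eq_mul, one_mul, probReal_univ]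
    ring
  -- the event and the Chebyshev bound
  set A : Set Ω := {s | ∀ z, F s (xa z) = F s (xb z)} with hA_def
  have hAmeas : MeasurableSet A := measurable_forall_agree hmeas xa xb
  have hptwise : ∀ s, (M*(1-q))^2 * (if (∀ z, F s (xa z) = F s (xb z)) then (1:ℝ) else 0)
      ≤ (T s - q * M)^2 := by
    intro s
    by_cases h : ∀ z, F s (xa z) = F s (xb z)
    · have hTs : T s = M := by
        rw [hTdef]
        simp only [hY]
        rw [Finset.sum_congr rfl (fun z _ => if_pos (h z)), Finset.sum_const,
          Finset.card_univ, nsmul_eq_mul, mul_one, ← hc_def, ← hM_def]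
      rw [if_pos h, hTs, mul_one]
      apply le_of_eq
      ring
    · rw [if_neg h, mul_zero]
      positivity
  have hLHSint : Integrable
      (fun s => (M*(1-q))^2 * (if (∀ z, F s (xa z) = F s (xb z)) then (1:ℝ) else 0)) μ :=
    (integrable_boole μ _ hAmeas).const_mul _
  have hRHSint : Integrable (fun s => (T s - q * M)^2) μ := by
    have hfun : (fun s => (T s - q * M)^2)
        = fun s => (T s ^ 2 - (2*q*M) * T s) + (q*M)^2 := by
      funext s; ring
    rw [hfun]
    exact (hT2int.sub (hTint.const_mul _)).add (integrable_const _)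
  have hkey : (M*(1-q))^2 * (μ A).toReal ≤ M * q * (1 - q) := by
    have := integral_mono hLHSint hRHSint hptwise
    rwa [integral_const_mul, integral_boole μ _ hAmeas, hvar] at this
  -- conclude
  have hq1 : q ≤ 1 := by nlinarith
  have hp' : 0 < 1 - q := by nlinarith
  have hx0 : 0 ≤ (μ A).toReal := ENNReal.toReal_nonneg
  have hbound : (μ A).toReal ≤ 1 / (M * (1 - q)) := by
    rw [le_div_iff₀ (by positivity)]
    have h1 : (M*(1-q)) * ((μ A).toReal * (M * (1 - q))) ≤ (M*(1-q)) * 1 := by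
      nlinarith [hkey, mul_pos hM0 hp']
    exact le_of_mul_le_mul_left h1 (by positivity)
  have hMC : M = (2:ℝ)^(n-l) := by
    rw [hM_def, hc_def]
    simp [Z]
  have hq' : 1 - q = 2*p*(1-p) := by rw [hq_def]; ring
  rw [← hMC, ← hq']
  exact hbound

end Stmt9Aux

/-- For a random function `F : {0,1}^n → {0,1}` whose values are
4-wise independent with one-probability `p`, the expected number of unordered
pairs `{α, α'}` of distinct elements of `{0,1}^l` with `F_α = F_{α'}` (counted
as half the number of ordered pairs of distinct elements) is at most
`2^{2l−1}/(2^{n−l}·p')` with `p' = 2p(1−p)`. -/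
theorem stmt_9 {Ω : Type*} [MeasurableSpace Ω] (μ : Measure Ω)
    [IsProbabilityMeasure μ]
    (n l : ℕ) (hn : 2 ≤ n) (hl : 1 ≤ l) (hln : l < n)
    (p : ℝ) (hp0 : 0 < p) (hp1 : p < 1)
    (F : Ω → (Fin n → Bool) → Bool)
    (hmeas : ∀ x, Measurable (fun s => F s x))
    (hbias : ∀ x, (μ {s | F s x = true}).toReal = p)
    (hind : ∀ x₁ x₂ x₃ x₄ : Fin n → Bool,
      x₁ ≠ x₂ → x₁ ≠ x₃ → x₁ ≠ x₄ → x₂ ≠ x₃ → x₂ ≠ x₄ → x₃ ≠ x₄ →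
      ∀ l₁ l₂ l₃ l₄ : Bool,
        (μ {s | F s x₁ = l₁ ∧ F s x₂ = l₂ ∧ F s x₃ = l₃ ∧ F s x₄ = l₄}).toReal =
          (μ {s | F s x₁ = l₁}).toReal * (μ {s | F s x₂ = l₂}).toReal *
          (μ {s | F s x₃ = l₃}).toReal * (μ {s | F s x₄ = l₄}).toReal) :
    ∫ s, (((Finset.univ.offDiag.filter
        (fun q : (Fin l → Bool) × (Fin l → Bool) =>
          ∀ z, F s (subInput n l q.1 z) = F s (subInput n l q.2 z))).card : ℝ)
        / 2) ∂μ ≤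
      2 ^ (2 * l - 1) / (2 ^ (n - l) * (2 * p * (1 - p))) := by
  
  classical
  have hn4 : 4 ≤ Fintype.card (Fin n → Bool) := by
    have hcard : Fintype.card (Fin n → Bool) = 2 ^ n := by simp
    rw [hcard]
    calc (4:ℕ) = 2^2 := rfl
    _ ≤ 2^n := Nat.pow_le_pow_right (by norm_num) hn
  have hpp : 0 < 2*p*(1-p) := by nlinarith
  set B : ℝ := 1 / ((2:ℝ)^(n-l) * (2*p*(1-p))) with hB_def
  have hB0 : 0 ≤ B := by positivity
  have hfun : (fun s => ((Finset.univ.offDiag.filter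
        (fun q : (Fin l → Bool) × (Fin l → Bool) =>
          ∀ z, F s (subInput n l q.1 z) = F s (subInput n l q.2 z))).card : ℝ) / 2)
      = fun s => (∑ qp ∈ (Finset.univ : Finset (Fin l → Bool)).offDiag,
          if (∀ z, F s (subInput n l qp.1 z) = F s (subInput n l qp.2 z)) then (1:ℝ) else 0) / 2 := by
    funext s
    rw [Finset.card_filter]
    push_cast
    rfl
  rw [hfun]
  have hintg : ∀ qp ∈ (Finset.univ : Finset (Fin l → Bool)).offDiag,
      Integrable (fun s => if (∀ z, F s (subInput n l qp.1 z) = F s (subInput n l qp.2 z))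
        then (1:ℝ) else 0) μ :=
    fun qp _ => Stmt9Aux.integrable_boole μ _
      (Stmt9Aux.measurable_forall_agree hmeas (fun z => subInput n l qp.1 z)
        (fun z => subInput n l qp.2 z))
  rw [integral_div, integral_finset_sum _ hintg]
  have hterm : ∀ qp ∈ (Finset.univ : Finset (Fin l → Bool)).offDiag,
      (∫ s, (if (∀ z, F s (subInput n l qp.1 z) = F s (subInput n l qp.2 z))
        then (1:ℝ) else 0) ∂μ) ≤ B := by
    intro qp hqp
    rw [Stmt9Aux.integral_boole μ _
      (Stmt9Aux.measurable_forall_agree hmeas (fun z => subInput n l qp.1 z)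
        (fun z => subInput n l qp.2 z))]
    exact Stmt9Aux.pair_bound μ hmeas hbias hn4 hind hp0 hp1 l (le_of_lt hln)
      qp.1 qp.2 (Finset.mem_offDiag.mp hqp).2.2
  have hsum : (∑ qp ∈ (Finset.univ : Finset (Fin l → Bool)).offDiag,
      ∫ s, (if (∀ z, F s (subInput n l qp.1 z) = F s (subInput n l qp.2 z))
        then (1:ℝ) else 0) ∂μ)
      ≤ ((Finset.univ : Finset (Fin l → Bool)).offDiag.card : ℝ) * B := by
    calc _ ≤ ∑ _qp ∈ (Finset.univ : Finset (Fin l → Bool)).offDiag, B :=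
        Finset.sum_le_sum hterm
    _ = _ := by rw [Finset.sum_const, nsmul_eq_mul]
  have hcard : (((Finset.univ : Finset (Fin l → Bool)).offDiag.card : ℕ) : ℝ)
      ≤ (2:ℝ)^(2*l) := by
    have h1 : (Finset.univ : Finset (Fin l → Bool)).offDiag.card ≤ 2^(2*l) := by
      rw [Finset.offDiag_card, Finset.card_univ]
      have h2 : Fintype.card (Fin l → Bool) = 2^l := by simp
      rw [h2]
      calc 2^l * 2^l - 2^l ≤ 2^l * 2^l := Nat.sub_le _ _
      _ = 2^(2*l) := by rw [two_mul, pow_add]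
    calc (((Finset.univ : Finset (Fin l → Bool)).offDiag.card : ℕ) : ℝ)
        ≤ ((2^(2*l) : ℕ) : ℝ) := Nat.cast_le.mpr h1
    _ = (2:ℝ)^(2*l) := by push_cast; ring
  have h2l : (2:ℝ)^(2*l) = 2^(2*l-1) * 2 := by
    rw [← pow_succ]
    congr 1
    omega
  have hfinal : (2:ℝ)^(2*l-1) * B = 2 ^ (2 * l - 1) / (2 ^ (n - l) * (2 * p * (1 - p))) := by
    rw [hB_def, mul_one_div]
  rw [← hfinal]
  have step1 : ((Finset.univ : Finset (Fin l → Bool)).offDiag.card : ℝ) * B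
      ≤ (2:ℝ)^(2*l) * B := mul_le_mul_of_nonneg_right hcard hB0
  rw [h2l] at step1
  linarith
end

section
/- Let n ≥ 2, 1 ≤ l < n, and 0 < p < 1, and set p' = 2p(1−p). Let F be a random function from {0,1}^n to {0,1} on a probability space S such that the family (F(·)(x))_{x ∈ {0,1}^n} is 4-wise independent with P(F(·)(x) = 1) = p for every x. If C(n,l)·2^{2l−1} < 2^{n−l}·p', where C(n,l) is the binomial coefficient, then there exists a sample point s ∈ S such that the function F(s) : {0,1}^n → {0,1} is l-mixed. -/
open MeasureTheory

open Finset


def mrg {n : ℕ} (V : Finset (Fin n)) (a z : Fin n → Bool) : Fin n → Bool :=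
  fun i => if i ∈ V then a i else z i

def canon {n : ℕ} (V : Finset (Fin n)) (a : Fin n → Bool) : Fin n → Bool :=
  fun i => if i ∈ V then a i else false

noncomputable def pairsV (n : ℕ) (V : Finset (Fin n)) :
    Finset ((Fin n → Bool) × (Fin n → Bool)) :=
  Finset.univ.filter fun q =>
    (Fintype.equivFin (Fin n → Bool)) q.1 < (Fintype.equivFin (Fin n → Bool)) q.2 ∧
    (∀ i ∉ V, q.1 i = false) ∧ (∀ i ∉ V, q.2 i = false)

noncomputable def idxT (n l : ℕ) :
    Finset ((_ : Finset (Fin n)) × ((Fin n → Bool) × (Fin n → Bool))) :=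
  (Finset.powersetCard l (Finset.univ : Finset (Fin n))).sigma (pairsV n)

lemma card_canonical {n : ℕ} (W : Finset (Fin n)) :
    (Finset.univ.filter (fun a : Fin n → Bool => ∀ i ∉ W, a i = false)).card
      = 2 ^ W.card := by
  classical
  have : (Finset.univ.filter (fun a : Fin n → Bool => ∀ i ∉ W, a i = false)).card
      = (Finset.univ : Finset ({i // i ∈ W} → Bool)).card := by
    apply Finset.card_bij' (i := fun a _ => fun w : {i // i ∈ W} => a w.1)
      (j := fun g _ => fun i => if h : i ∈ W then g ⟨i, h⟩ else false)
    · intro a ha; exact Finset.mem_univ _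
    · intro g hg
      simp only [Finset.mem_filter, Finset.mem_univ, true_and]
      intro i hi; simp [hi]
    · intro a ha
      funext i
      by_cases h : i ∈ W
      · simp [h]
      · simp only [Finset.mem_filter, Finset.mem_univ, true_and] at ha
        simp [h, ha i h]
    · intro g hg; funext w; simp [w.2]
  rw [this, Finset.card_univ, Fintype.card_fun]
  simp [Fintype.card_coe]

lemma card_pairsV {n l : ℕ} (hl : 1 ≤ l) (V : Finset (Fin n)) (hV : V.card = l) :
    (pairsV n V).card ≤ 2 ^ (2 * l - 1) := by
  classical
  set S : Finset (Fin n → Bool) :=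
    Finset.univ.filter (fun a : Fin n → Bool => ∀ i ∉ V, a i = false) with hSdef
  have hScard : S.card = 2 ^ l := by rw [hSdef, card_canonical, hV]
  have hsub : pairsV n V ⊆ S ×ˢ S := by
    intro q hq
    simp only [pairsV, Finset.mem_filter, Finset.mem_univ, true_and] at hq
    simp only [Finset.mem_product, hSdef, Finset.mem_filter, Finset.mem_univ, true_and]
    exact ⟨hq.2.1, hq.2.2⟩
  have hsub' : (pairsV n V).image Prod.swap ⊆ S ×ˢ S := by
    intro q hq
    obtain ⟨r, hr, hrq⟩ := Finset.mem_image.1 hq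
    simp only [pairsV, Finset.mem_filter, Finset.mem_univ, true_and] at hr
    subst hrq
    simp only [Finset.mem_product, hSdef, Finset.mem_filter, Finset.mem_univ, true_and,
      Prod.fst_swap, Prod.snd_swap]
    exact ⟨hr.2.2, hr.2.1⟩
  have hdisj : Disjoint (pairsV n V) ((pairsV n V).image Prod.swap) := by
    rw [Finset.disjoint_left]
    intro q hq hq'
    obtain ⟨r, hr, hrq⟩ := Finset.mem_image.1 hq'
    simp only [pairsV, Finset.mem_filter, Finset.mem_univ, true_and] at hq hr
    subst hrq
    exact absurd hr.1 (not_lt_of_gt hq.1)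
  have himg : ((pairsV n V).image Prod.swap).card = (pairsV n V).card :=
    Finset.card_image_of_injective _ Prod.swap_injective
  have hun : (pairsV n V).card + (pairsV n V).card ≤ 2 ^ l * 2 ^ l := by
    calc (pairsV n V).card + (pairsV n V).card
        = (pairsV n V ∪ (pairsV n V).image Prod.swap).card := by
          rw [Finset.card_union_of_disjoint hdisj, himg]
      _ ≤ (S ×ˢ S).card := Finset.card_le_card (Finset.union_subset hsub hsub')
      _ = 2 ^ l * 2 ^ l := by rw [Finset.card_product, hScard]
  have hpow : 2 ^ l * 2 ^ l = 2 * 2 ^ (2 * l - 1) := by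
    rw [← pow_add]
    have : l + l = (2 * l - 1) + 1 := by omega
    rw [this, pow_succ]
    ring
  omega


lemma core_bound {Ω : Type*} [MeasurableSpace Ω] (μ : Measure Ω) [IsProbabilityMeasure μ]
    {n : ℕ} (p : ℝ) (hp0 : 0 < p) (hp1 : p < 1)
    (F : Ω → (Fin n → Bool) → Bool)
    (hmeas : ∀ x, Measurable fun s => F s x)
    (hsingle : ∀ x (b : Bool), (μ {s | F s x = b}).toReal = if b then p else 1 - p)
    (hpair : ∀ x y : Fin n → Bool, x ≠ y → ∀ b c : Bool,
      (μ {s | F s x = b ∧ F s y = c}).toReal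
        = (μ {s | F s x = b}).toReal * (μ {s | F s y = c}).toReal)
    (hind : ∀ x₁ x₂ x₃ x₄ : Fin n → Bool,
      x₁ ≠ x₂ → x₁ ≠ x₃ → x₁ ≠ x₄ → x₂ ≠ x₃ → x₂ ≠ x₄ → x₃ ≠ x₄ →
      ∀ l₁ l₂ l₃ l₄ : Bool,
        (μ {s | F s x₁ = l₁ ∧ F s x₂ = l₂ ∧ F s x₃ = l₃ ∧ F s x₄ = l₄}).toReal =
          (μ {s | F s x₁ = l₁}).toReal * (μ {s | F s x₂ = l₂}).toReal *
          (μ {s | F s x₃ = l₃}).toReal * (μ {s | F s x₄ = l₄}).toReal)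
    (Z : Finset (Fin n → Bool)) (hZ : 0 < Z.card)
    (xp yp : (Fin n → Bool) → (Fin n → Bool))
    (hxy : ∀ z ∈ Z, xp z ≠ yp z)
    (hdis : ∀ z ∈ Z, ∀ w ∈ Z, z ≠ w →
      xp z ≠ xp w ∧ xp z ≠ yp w ∧ yp z ≠ xp w ∧ yp z ≠ yp w) :
    (μ {s | ∀ z ∈ Z, F s (xp z) = F s (yp z)}).toReal
      ≤ 1 / (Z.card * (2 * p * (1 - p))) := by
  classical
  set p' : ℝ := 2 * p * (1 - p) with hp'def
  have hp' : 0 < p' := by have : 0 < 1 - p := by linarith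
                          positivity
  set M : ℝ := (Z.card : ℝ) with hMdef
  have hM : 1 ≤ M := by rw [hMdef]; exact_mod_cast hZ
  -- basic sets
  set Ms : (Fin n → Bool) → Bool → Set Ω := fun x b => {s | F s x = b} with hMsdef
  have hMsMeas : ∀ x b, MeasurableSet (Ms x b) := fun x b =>
    (hmeas x) (measurableSet_singleton b)
  set P : (Fin n → Bool) → Bool → Set Ω :=
    fun z b => Ms (xp z) b ∩ Ms (yp z) (!b) with hPdef
  have hPMeas : ∀ z b, MeasurableSet (P z b) := fun z b =>
    (hMsMeas _ _).inter (hMsMeas _ _)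
  set A : (Fin n → Bool) → Set Ω := fun z => P z true ∪ P z false with hAdef
  have hAMeas : ∀ z, MeasurableSet (A z) := fun z => (hPMeas _ _).union (hPMeas _ _)
  have hPset : ∀ z b, P z b = {s | F s (xp z) = b ∧ F s (yp z) = !b} := by
    intro z b; rw [hPdef, hMsdef]; rw [Set.setOf_and]
  have hPval : ∀ z ∈ Z, ∀ b,
      (μ (P z b)).toReal = (if b then p else 1 - p) * (if !b then p else 1 - p) := by
    intro z hz b
    rw [hPset _ b, hpair _ _ (hxy z hz) b (!b), hsingle (xp z) b, hsingle (yp z) (!b)]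
  have hAval : ∀ z ∈ Z, (μ (A z)).toReal = p' := by
    intro z hz
    have hdisj : Disjoint (P z true) (P z false) := by
      rw [Set.disjoint_left]
      rintro s ⟨h1, _⟩ ⟨h2, _⟩
      rw [hMsdef, Set.mem_setOf_eq] at h1 h2; rw [h1] at h2; exact Bool.noConfusion h2
    rw [hAdef]
    simp only
    rw [measure_union hdisj (hPMeas z false),
      ENNReal.toReal_add (measure_ne_top μ _) (measure_ne_top μ _),
      hPval z hz true, hPval z hz false]
    norm_num [hp'def]; ring
  -- quad values
  have hQval : ∀ z ∈ Z, ∀ w ∈ Z, z ≠ w → ∀ b c,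
      (μ (P z b ∩ P w c)).toReal
        = ((if b then p else 1-p) * (if !b then p else 1-p)) *
          ((if c then p else 1-p) * (if !c then p else 1-p)) := by
    intro z hz w hw hzw b c
    obtain ⟨h1, h2, h3, h4⟩ := hdis z hz w hw hzw
    have hset : P z b ∩ P w c =
        {s | F s (xp z) = b ∧ F s (yp z) = !b ∧ F s (xp w) = c ∧ F s (yp w) = !c} := by
      rw [hPset, hPset]; ext s; simp only [Set.mem_inter_iff, Set.mem_setOf_eq]; tauto
    rw [hset, hind _ _ _ _ (hxy z hz) h1 h2 h3 h4 (hxy w hw) b (!b) c (!c),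
      hsingle (xp z) b, hsingle (yp z) (!b), hsingle (xp w) c, hsingle (yp w) (!c)]
    ring
  have hQbound : ∀ z ∈ Z, ∀ w ∈ Z, z ≠ w → (μ (A z ∩ A w)).toReal ≤ p' * p' := by
    intro z hz w hw hzw
    have hsub : A z ∩ A w ⊆
        (P z true ∩ P w true) ∪ ((P z true ∩ P w false) ∪
          ((P z false ∩ P w true) ∪ (P z false ∩ P w false))) := by
      rintro s ⟨hz1 | hz1, hw1 | hw1⟩
      · exact Or.inl ⟨hz1, hw1⟩
      · exact Or.inr (Or.inl ⟨hz1, hw1⟩)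
      · exact Or.inr (Or.inr (Or.inl ⟨hz1, hw1⟩))
      · exact Or.inr (Or.inr (Or.inr ⟨hz1, hw1⟩))
    have hle : μ (A z ∩ A w) ≤ μ (P z true ∩ P w true) + (μ (P z true ∩ P w false)
        + (μ (P z false ∩ P w true) + μ (P z false ∩ P w false))) := by
      refine le_trans (measure_mono hsub) ?_
      refine le_trans (measure_union_le _ _) ?_
      gcongr
      refine le_trans (measure_union_le _ _) ?_
      gcongr
      exact measure_union_le _ _
    have h2 := ENNReal.toReal_mono (by
      refine ENNReal.add_ne_top.2 ⟨measure_ne_top μ _, ?_⟩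
      refine ENNReal.add_ne_top.2 ⟨measure_ne_top μ _, ?_⟩
      exact ENNReal.add_ne_top.2 ⟨measure_ne_top μ _, measure_ne_top μ _⟩) hle
    refine le_trans h2 ?_
    rw [ENNReal.toReal_add (measure_ne_top μ _) (by
        exact ENNReal.add_ne_top.2 ⟨measure_ne_top μ _,
          ENNReal.add_ne_top.2 ⟨measure_ne_top μ _, measure_ne_top μ _⟩⟩),
      ENNReal.toReal_add (measure_ne_top μ _) (by
        exact ENNReal.add_ne_top.2 ⟨measure_ne_top μ _, measure_ne_top μ _⟩),
      ENNReal.toReal_add (measure_ne_top μ _) (measure_ne_top μ _),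
      hQval z hz w hw hzw true true, hQval z hz w hw hzw true false,
      hQval z hz w hw hzw false true, hQval z hz w hw hzw false false]
    norm_num [hp'def]; nlinarith [sq_nonneg p, sq_nonneg (1-p)]
  -- indicators
  set ind : (Fin n → Bool) → Ω → ℝ := fun z => (A z).indicator (fun _ => (1:ℝ)) with hinddef
  have hindInt : ∀ z, Integrable (ind z) μ := fun z =>
    (integrable_const (1:ℝ)).indicator (hAMeas z)
  have hindval : ∀ z ∈ Z, ∫ s, ind z s ∂μ = p' := by
    intro z hz
    rw [hinddef]
    simp only
    rw [integral_indicator_const (1:ℝ) (hAMeas z), smul_eq_mul, mul_one, measureReal_def, hAval z hz]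
  set N : Ω → ℝ := fun s => ∑ z ∈ Z, ind z s with hNdef
  have hNInt : Integrable N μ := integrable_finset_sum _ (fun z _ => hindInt z)
  have hEN : ∫ s, N s ∂μ = M * p' := by
    rw [hNdef]
    simp only
    rw [integral_finset_sum _ (fun z _ => hindInt z)]
    rw [Finset.sum_congr rfl (fun z hz => hindval z hz), Finset.sum_const, nsmul_eq_mul, hMdef]
  -- second moment
  have hprodind : ∀ z w, (fun s => ind z s * ind w s)
      = (A z ∩ A w).indicator (fun _ => (1:ℝ)) := by
    intro z w
    funext s
    rw [hinddef]
    simp only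
    rw [← Set.inter_indicator_mul]
    simp
  have hprodInt : ∀ z w, Integrable (fun s => ind z s * ind w s) μ := by
    intro z w
    rw [hprodind]
    exact (integrable_const (1:ℝ)).indicator ((hAMeas z).inter (hAMeas w))
  set N2 : Ω → ℝ := fun s => ∑ z ∈ Z, ∑ w ∈ Z, ind z s * ind w s with hN2def
  have hN2Int : Integrable N2 μ :=
    integrable_finset_sum _ (fun z _ => integrable_finset_sum _ (fun w _ => hprodInt z w))
  have hNsq : ∀ s, N s ^ 2 = N2 s := by
    intro s
    rw [hNdef, hN2def, sq]
    simp only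
    rw [Finset.sum_mul_sum]
  have hEN2 : ∫ s, N2 s ∂μ ≤ M * p' + M * (M - 1) * (p' * p') := by
    rw [hN2def]
    simp only
    rw [integral_finset_sum _ (fun z _ => integrable_finset_sum _ (fun w _ => hprodInt z w))]
    have hin : ∀ z ∈ Z, (∫ s, ∑ w ∈ Z, ind z s * ind w s ∂μ)
        ≤ p' + (M - 1) * (p' * p') := by
      intro z hz
      rw [integral_finset_sum _ (fun w _ => hprodInt z w)]
      have hterm : ∀ w, ∫ s, ind z s * ind w s ∂μ = (μ (A z ∩ A w)).toReal := by
        intro w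
        rw [hprodind z w, integral_indicator_const (1:ℝ) ((hAMeas z).inter (hAMeas w)),
          smul_eq_mul, mul_one, measureReal_def]
      rw [Finset.sum_congr rfl (fun w _ => hterm w)]
      rw [← Finset.add_sum_erase _ _ hz]
      have hdiag : (μ (A z ∩ A z)).toReal = p' := by rw [Set.inter_self]; exact hAval z hz
      have hrest : ∑ w ∈ Z.erase z, (μ (A z ∩ A w)).toReal ≤ (M - 1) * (p' * p') := by
        have h1 : ∑ w ∈ Z.erase z, (μ (A z ∩ A w)).toReal
            ≤ (Z.erase z).card • (p' * p') := by
          apply Finset.sum_le_card_nsmul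
          intro w hw
          exact hQbound z hz w (Finset.mem_of_mem_erase hw)
            (Ne.symm (Finset.ne_of_mem_erase hw))
        rw [nsmul_eq_mul, Finset.card_erase_of_mem hz, Nat.cast_sub hZ] at h1
        simpa [hMdef] using h1
      rw [hdiag]
      linarith
    calc ∑ z ∈ Z, ∫ s, ∑ w ∈ Z, ind z s * ind w s ∂μ
        ≤ ∑ z ∈ Z, (p' + (M - 1) * (p' * p')) := Finset.sum_le_sum hin
      _ = M * (p' + (M - 1) * (p' * p')) := by
          rw [Finset.sum_const, nsmul_eq_mul, hMdef]
      _ = M * p' + M * (M - 1) * (p' * p') := by ring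
  -- the bad event
  set E : ℝ := M * p' with hEdef
  have hEpos : 0 < E := by rw [hEdef]; nlinarith
  set B : Set Ω := {s | ∀ z ∈ Z, F s (xp z) = F s (yp z)} with hBdef
  have hBMeas : MeasurableSet B := by
    have : B = ⋂ z ∈ (Z : Set (Fin n → Bool)), {s | F s (xp z) = F s (yp z)} := by
      ext s; simp [hBdef]
    rw [this]
    refine MeasurableSet.biInter (Z : Set (Fin n → Bool)).to_countable ?_
    intro z _
    have : {s | F s (xp z) = F s (yp z)}
        = (Ms (xp z) true ∩ Ms (yp z) true) ∪ (Ms (xp z) false ∩ Ms (yp z) false) := by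
      rw [hMsdef]
      ext s
      simp only [Set.mem_setOf_eq, Set.mem_union, Set.mem_inter_iff]
      cases h1 : F s (xp z) <;> cases h2 : F s (yp z) <;> simp
    rw [this]
    exact ((hMsMeas _ _).inter (hMsMeas _ _)).union ((hMsMeas _ _).inter (hMsMeas _ _))
  -- variance / Chebyshev
  set G : Ω → ℝ := fun s => (N s - E) ^ 2 with hGdef
  have hGeq : G = fun s => N2 s - (2 * E) * N s + E ^ 2 := by
    funext s; rw [hGdef]; simp only; rw [← hNsq s]; ring
  have hGInt : Integrable G μ := by
    rw [hGeq]
    exact (hN2Int.sub (hNInt.const_mul (2 * E))).add (integrable_const _)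
  have hGval : ∫ s, G s ∂μ ≤ M * p' := by
    rw [hGeq]
    have hf1 : Integrable (fun s => 2 * E * N s) μ := hNInt.const_mul (2 * E)
    have hf2 : Integrable (fun s => N2 s - 2 * E * N s) μ := hN2Int.sub hf1
    rw [integral_add hf2 (integrable_const _), integral_sub hN2Int hf1,
      integral_const_mul, hEN, integral_const]
    simp only [measureReal_def, measure_univ, ENNReal.toReal_one, smul_eq_mul, one_mul]
    have := hEN2
    rw [hEdef]
    nlinarith [sq_nonneg p']
  have hkey : ∀ s, B.indicator (fun _ => E ^ 2) s ≤ G s := by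
    intro s
    by_cases hs : s ∈ B
    · rw [Set.indicator_of_mem hs]
      have hN0 : N s = 0 := by
        rw [hNdef]
        simp only
        apply Finset.sum_eq_zero
        intro z hz
        have hnot : s ∉ A z := by
          intro hsA
          have heq := hs z hz
          rcases hsA with h | h
          · rcases h with ⟨ha, hb⟩
            rw [hMsdef, Set.mem_setOf_eq] at ha hb
            rw [ha, hb] at heq; exact Bool.noConfusion heq
          · rcases h with ⟨ha, hb⟩
            rw [hMsdef, Set.mem_setOf_eq] at ha hb
            rw [ha, hb] at heq; exact Bool.noConfusion heq
        rw [hinddef]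
        simp only
        exact Set.indicator_of_notMem hnot _
      rw [hGdef]
      simp only
      rw [hN0]
      norm_num
    · rw [Set.indicator_of_notMem hs]
      rw [hGdef]
      exact sq_nonneg _
  have hlow : (μ B).toReal * E ^ 2 ≤ ∫ s, G s ∂μ := by
    have h1 := integral_mono ((integrable_const (E ^ 2)).indicator hBMeas) hGInt hkey
    rw [integral_indicator_const (E ^ 2) hBMeas, smul_eq_mul] at h1
    exact h1
  have hfinal : (μ B).toReal * E ^ 2 ≤ M * p' := le_trans hlow hGval
  have hfinal' : (μ B).toReal * E ^ 2 ≤ E := by rw [hEdef] at hfinal ⊢; exact hfinal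
  rw [le_div_iff₀ hEpos]
  nlinarith [hfinal', hEpos, ENNReal.toReal_nonneg (a := μ B)]


def badSet {Ω : Type*} (n : ℕ) (F : Ω → (Fin n → Bool) → Bool)
    (t : (_ : Finset (Fin n)) × ((Fin n → Bool) × (Fin n → Bool))) : Set Ω :=
  {s | ∀ z, F s (mrg t.1 t.2.1 z) = F s (mrg t.1 t.2.2 z)}

/-- A function `f : {0,1}^n → {0,1}` is `r`-mixed if for every set `V` of `r`
variables, the `2^r` assignments of constants to the variables in `V` lead to
pairwise distinct subfunctions of the remaining variables. -/
def IsMixed (n r : ℕ) (f : (Fin n → Bool) → Bool) : Prop :=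
  ∀ V : Finset (Fin n), V.card = r →
    ∀ a a' : Fin n → Bool, (∃ i ∈ V, a i ≠ a' i) →
      (fun z : Fin n → Bool => f (fun i => if i ∈ V then a i else z i)) ≠
      (fun z : Fin n → Bool => f (fun i => if i ∈ V then a' i else z i))

/-- For a random function `F : {0,1}^n → {0,1}` whose values are
4-wise independent with one-probability `p`, if `C(n,l)·2^{2l−1} < 2^{n−l}·p'`
with `p' = 2p(1−p)`, then some sample point `s` yields an `l`-mixed function
`F s`. -/
theorem stmt_11 {Ω : Type*} [MeasurableSpace Ω] (μ : Measure Ω)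
    [IsProbabilityMeasure μ]
    (n l : ℕ) (hn : 2 ≤ n) (hl : 1 ≤ l) (hln : l < n)
    (p : ℝ) (hp0 : 0 < p) (hp1 : p < 1)
    (F : Ω → (Fin n → Bool) → Bool)
    (hmeas : ∀ x, Measurable (fun s => F s x))
    (hbias : ∀ x, (μ {s | F s x = true}).toReal = p)
    (hind : ∀ x₁ x₂ x₃ x₄ : Fin n → Bool,
      x₁ ≠ x₂ → x₁ ≠ x₃ → x₁ ≠ x₄ → x₂ ≠ x₃ → x₂ ≠ x₄ → x₃ ≠ x₄ →
      ∀ l₁ l₂ l₃ l₄ : Bool,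
        (μ {s | F s x₁ = l₁ ∧ F s x₂ = l₂ ∧ F s x₃ = l₃ ∧ F s x₄ = l₄}).toReal =
          (μ {s | F s x₁ = l₁}).toReal * (μ {s | F s x₂ = l₂}).toReal *
          (μ {s | F s x₃ = l₃}).toReal * (μ {s | F s x₄ = l₄}).toReal)
    (hsize : (n.choose l : ℝ) * 2 ^ (2 * l - 1) <
      2 ^ (n - l) * (2 * p * (1 - p))) :
    ∃ s : Ω, IsMixed n l (F s) := by
  classical
  have hp' : 0 < 2 * p * (1 - p) := by nlinarith
  have hMs : ∀ (x : Fin n → Bool) (b : Bool), MeasurableSet {s | F s x = b} :=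
    fun x b => (hmeas x) (measurableSet_singleton b)
  have hsingle : ∀ x (b : Bool), (μ {s | F s x = b}).toReal = if b then p else 1 - p := by
    intro x b
    cases b
    · have hc : {s | F s x = false} = {s | F s x = true}ᶜ := by
        ext s; simp [Bool.not_eq_true]
      rw [hc, measure_compl (hMs x true) (measure_ne_top μ _), measure_univ,
        ENNReal.toReal_sub_of_le prob_le_one ENNReal.one_ne_top, ENNReal.toReal_one,
        hbias x]
      simp
    · simpa using hbias x
  have hsplit : ∀ (S : Set Ω), MeasurableSet S → ∀ w : Fin n → Bool,
      μ S = μ (S ∩ {s | F s w = true}) + μ (S ∩ {s | F s w = false}) := by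
    intro S hS w
    have h2 : S \ {s | F s w = true} = S ∩ {s | F s w = false} := by
      ext s; simp [Bool.not_eq_true]
    rw [← measure_inter_add_diff S (hMs w true), h2]
  have hpair : ∀ x y : Fin n → Bool, x ≠ y → ∀ b c : Bool,
      (μ {s | F s x = b ∧ F s y = c}).toReal
        = (μ {s | F s x = b}).toReal * (μ {s | F s y = c}).toReal := by
    intro x y hxyne b c
    have hcard2 : 1 < ((Finset.univ : Finset (Fin n → Bool)) \ {x, y}).card := by
      have h4 : 4 ≤ Fintype.card (Fin n → Bool) := by
        rw [Fintype.card_fun, Fintype.card_bool, Fintype.card_fin]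
        calc 4 = 2 ^ 2 := by norm_num
          _ ≤ 2 ^ n := Nat.pow_le_pow_right (by norm_num) hn
      have h1 : ({x, y} : Finset (Fin n → Bool)).card ≤ 2 :=
        (Finset.card_insert_le _ _).trans (by simp)
      have h2 := Finset.card_sdiff_of_subset (Finset.subset_univ ({x, y} : Finset (Fin n → Bool)))
      rw [Finset.card_univ] at h2
      omega
    obtain ⟨u, hu, v, hv, huv⟩ := Finset.one_lt_card.1 hcard2
    rw [Finset.mem_sdiff, Finset.mem_insert, Finset.mem_singleton] at hu hv
    push_neg at hu hv
    obtain ⟨-, hux, huy⟩ := hu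
    obtain ⟨-, hvx, hvy⟩ := hv
    have hSm : MeasurableSet {s : Ω | F s x = b ∧ F s y = c} := by
      rw [Set.setOf_and]; exact (hMs x b).inter (hMs y c)
    have hq : ∀ b3 b4 : Bool,
        ({s : Ω | F s x = b ∧ F s y = c} ∩ {s | F s u = b3}) ∩ {s | F s v = b4}
          = {s | F s x = b ∧ F s y = c ∧ F s u = b3 ∧ F s v = b4} := by
      intro b3 b4; ext s
      simp only [Set.mem_inter_iff, Set.mem_setOf_eq]; tauto
    have hdec : μ {s | F s x = b ∧ F s y = c}
        = μ {s | F s x = b ∧ F s y = c ∧ F s u = true ∧ F s v = true}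
        + μ {s | F s x = b ∧ F s y = c ∧ F s u = true ∧ F s v = false}
        + (μ {s | F s x = b ∧ F s y = c ∧ F s u = false ∧ F s v = true}
        + μ {s | F s x = b ∧ F s y = c ∧ F s u = false ∧ F s v = false}) := by
      rw [hsplit _ hSm u,
        hsplit _ (hSm.inter (hMs u true)) v, hsplit _ (hSm.inter (hMs u false)) v,
        hq true true, hq true false, hq false true, hq false false]
    have hindv := fun b3 b4 => hind x y u v hxyne (Ne.symm hux) (Ne.symm hvx)
      (Ne.symm huy) (Ne.symm hvy) huv b c b3 b4
    have htr : (μ {s | F s x = b ∧ F s y = c}).toReal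
        = (μ {s | F s x = b ∧ F s y = c ∧ F s u = true ∧ F s v = true}).toReal
        + (μ {s | F s x = b ∧ F s y = c ∧ F s u = true ∧ F s v = false}).toReal
        + ((μ {s | F s x = b ∧ F s y = c ∧ F s u = false ∧ F s v = true}).toReal
        + (μ {s | F s x = b ∧ F s y = c ∧ F s u = false ∧ F s v = false}).toReal) := by
      rw [hdec,
        ENNReal.toReal_add (ENNReal.add_ne_top.2 ⟨measure_ne_top μ _, measure_ne_top μ _⟩)
          (ENNReal.add_ne_top.2 ⟨measure_ne_top μ _, measure_ne_top μ _⟩),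
        ENNReal.toReal_add (measure_ne_top μ _) (measure_ne_top μ _),
        ENNReal.toReal_add (measure_ne_top μ _) (measure_ne_top μ _)]
    rw [htr, hindv true true, hindv true false, hindv false true, hindv false false,
      hsingle u true, hsingle u false, hsingle v true, hsingle v false]
    norm_num
    ring
  -- per-event bound
  have hbadle : ∀ t ∈ idxT n l,
      (μ (badSet n F t)).toReal ≤ 1 / ((2:ℝ) ^ (n - l) * (2 * p * (1 - p))) := by
    rintro ⟨V, a, a'⟩ ht
    rw [idxT, Finset.mem_sigma] at ht
    obtain ⟨hVmem, hpmem⟩ := ht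
    rw [Finset.mem_powersetCard] at hVmem
    have hVl : V.card = l := hVmem.2
    simp only [pairsV, Finset.mem_filter, Finset.mem_univ, true_and] at hpmem
    obtain ⟨hltp, hcanA, hcanA'⟩ := hpmem
    have haa : a ≠ a' := by
      intro h; rw [h] at hltp; exact lt_irrefl _ hltp
    set Z : Finset (Fin n → Bool) :=
      Finset.univ.filter (fun z : Fin n → Bool => ∀ i ∉ Vᶜ, z i = false) with hZdef
    have hZcard : Z.card = 2 ^ (n - l) := by
      rw [hZdef, card_canonical, Finset.card_compl, Fintype.card_fin, hVl]
    have hZpos : 0 < Z.card := by rw [hZcard]; positivity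
    have hZmem : ∀ z ∈ Z, ∀ i ∈ V, z i = false := by
      intro z hz i hi
      rw [hZdef, Finset.mem_filter] at hz
      exact hz.2 i (by simpa using hi)
    obtain ⟨i0, hi0⟩ := Function.ne_iff.1 haa
    have hi0V : i0 ∈ V := by
      by_contra h
      rw [hcanA i0 h, hcanA' i0 h] at hi0
      exact hi0 rfl
    have hxy : ∀ z ∈ Z, mrg V a z ≠ mrg V a' z := by
      intro z hz h
      have h2 := congrFun h i0
      simp only [mrg, hi0V, if_pos] at h2
      exact hi0 h2
    have hdis : ∀ z ∈ Z, ∀ w ∈ Z, z ≠ w →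
        mrg V a z ≠ mrg V a w ∧ mrg V a z ≠ mrg V a' w ∧
        mrg V a' z ≠ mrg V a w ∧ mrg V a' z ≠ mrg V a' w := by
      intro z hz w hw hzw
      obtain ⟨j, hj⟩ := Function.ne_iff.1 hzw
      have hjV : j ∉ V := by
        intro hjv
        rw [hZmem z hz j hjv, hZmem w hw j hjv] at hj
        exact hj rfl
      refine ⟨?_, ?_, ?_, ?_⟩ <;>
        · intro h
          have h2 := congrFun h j
          simp only [mrg, hjV, if_neg] at h2
          exact hj h2
    have hsubZ : badSet n F ⟨V, (a, a')⟩
        ⊆ {s | ∀ z ∈ Z, F s (mrg V a z) = F s (mrg V a' z)} := by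
      intro s hs z _
      exact hs z
    have hcore := core_bound μ p hp0 hp1 F hmeas hsingle hpair hind Z hZpos
      (mrg V a) (mrg V a') hxy hdis
    have hmono : (μ (badSet n F ⟨V, (a, a')⟩)).toReal
        ≤ (μ {s | ∀ z ∈ Z, F s (mrg V a z) = F s (mrg V a' z)}).toReal :=
      ENNReal.toReal_mono (measure_ne_top μ _) (measure_mono hsubZ)
    refine le_trans hmono (le_trans hcore ?_)
    rw [hZcard]
    push_cast
    exact le_rfl
  -- counting
  have hTcard : (idxT n l).card ≤ n.choose l * 2 ^ (2 * l - 1) := by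
    rw [idxT, Finset.card_sigma]
    calc ∑ V ∈ Finset.powersetCard l Finset.univ, (pairsV n V).card
        ≤ ∑ _V ∈ Finset.powersetCard l (Finset.univ : Finset (Fin n)), 2 ^ (2 * l - 1) := by
          apply Finset.sum_le_sum
          intro V hV
          rw [Finset.mem_powersetCard] at hV
          exact card_pairsV hl V hV.2
      _ = (Finset.powersetCard l (Finset.univ : Finset (Fin n))).card * 2 ^ (2 * l - 1) := by
          rw [Finset.sum_const, smul_eq_mul]
      _ = n.choose l * 2 ^ (2 * l - 1) := by
          rw [Finset.card_powersetCard, Finset.card_univ, Fintype.card_fin]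
  -- union bound
  have hUlt : (μ (⋃ t ∈ idxT n l, badSet n F t)).toReal < 1 := by
    have h1 : μ (⋃ t ∈ idxT n l, badSet n F t) ≤ ∑ t ∈ idxT n l, μ (badSet n F t) :=
      measure_biUnion_finset_le _ _
    have hne : (∑ t ∈ idxT n l, μ (badSet n F t)) ≠ ⊤ :=
      (ENNReal.sum_lt_top.2 fun t _ => measure_lt_top μ _).ne
    have h2 : (μ (⋃ t ∈ idxT n l, badSet n F t)).toReal
        ≤ ∑ t ∈ idxT n l, (μ (badSet n F t)).toReal := by
      refine le_trans (ENNReal.toReal_mono hne h1) ?_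
      rw [ENNReal.toReal_sum fun t _ => measure_ne_top μ _]
    have h3 : ∑ t ∈ idxT n l, (μ (badSet n F t)).toReal
        ≤ ((idxT n l).card : ℝ) * (1 / ((2:ℝ) ^ (n - l) * (2 * p * (1 - p)))) := by
      calc ∑ t ∈ idxT n l, (μ (badSet n F t)).toReal
          ≤ ∑ _t ∈ idxT n l, (1 / ((2:ℝ) ^ (n - l) * (2 * p * (1 - p)))) :=
            Finset.sum_le_sum hbadle
        _ = _ := by rw [Finset.sum_const, nsmul_eq_mul]
    have hD : (0:ℝ) < 2 ^ (n - l) * (2 * p * (1 - p)) := by positivity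
    have h4 : ((idxT n l).card : ℝ) * (1 / ((2:ℝ) ^ (n - l) * (2 * p * (1 - p)))) < 1 := by
      rw [mul_one_div, div_lt_one hD]
      calc ((idxT n l).card : ℝ)
          ≤ ((n.choose l * 2 ^ (2 * l - 1) : ℕ) : ℝ) := by exact_mod_cast hTcard
        _ = (n.choose l : ℝ) * 2 ^ (2 * l - 1) := by push_cast; ring
        _ < _ := hsize
    linarith [le_trans h2 h3]
  have hneU : (⋃ t ∈ idxT n l, badSet n F t) ≠ Set.univ := by
    intro h
    rw [h] at hUlt
    simp at hUlt
  obtain ⟨s, hs⟩ := (Set.ne_univ_iff_exists_notMem _).1 hneU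
  refine ⟨s, ?_⟩
  rintro V hV a a' ⟨i, hiV, hdiff⟩ heq
  have hzeq : ∀ z, F s (mrg V (canon V a) z) = F s (mrg V (canon V a') z) := by
    intro z
    have h1 : mrg V a z = mrg V (canon V a) z := by
      funext j; by_cases hj : j ∈ V <;> simp [mrg, canon, hj]
    have h2 : mrg V a' z = mrg V (canon V a') z := by
      funext j; by_cases hj : j ∈ V <;> simp [mrg, canon, hj]
    have h3 := congrFun heq z
    rw [← h1, ← h2]
    exact h3
  have hcanA : ∀ j ∉ V, canon V a j = false := by intro j hj; simp [canon, hj]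
  have hcanA' : ∀ j ∉ V, canon V a' j = false := by intro j hj; simp [canon, hj]
  have hnecan : canon V a ≠ canon V a' := by
    intro h
    have h2 := congrFun h i
    simp [canon, hiV] at h2
    exact hdiff h2
  have hene : (Fintype.equivFin (Fin n → Bool)) (canon V a)
      ≠ (Fintype.equivFin (Fin n → Bool)) (canon V a') :=
    fun h => hnecan ((Fintype.equivFin (Fin n → Bool)).injective h)
  have hVmem : V ∈ Finset.powersetCard l (Finset.univ : Finset (Fin n)) :=
    Finset.mem_powersetCard.2 ⟨Finset.subset_univ V, hV⟩
  rcases lt_or_gt_of_ne hene with hltc | hgtc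
  · have hT : (⟨V, (canon V a, canon V a')⟩ :
        (_ : Finset (Fin n)) × ((Fin n → Bool) × (Fin n → Bool))) ∈ idxT n l := by
      rw [idxT, Finset.mem_sigma]
      refine ⟨hVmem, ?_⟩
      simp only [pairsV, Finset.mem_filter, Finset.mem_univ, true_and]
      exact ⟨hltc, hcanA, hcanA'⟩
    exact hs (Set.mem_iUnion₂.2 ⟨_, hT, hzeq⟩)
  · have hT : (⟨V, (canon V a', canon V a)⟩ :
        (_ : Finset (Fin n)) × ((Fin n → Bool) × (Fin n → Bool))) ∈ idxT n l := by
      rw [idxT, Finset.mem_sigma]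
      refine ⟨hVmem, ?_⟩
      simp only [pairsV, Finset.mem_filter, Finset.mem_univ, true_and]
      exact ⟨hgtc, hcanA', hcanA⟩
    exact hs (Set.mem_iUnion₂.2 ⟨_, hT, fun z => (hzeq z).symm⟩)
end

section
/- Fix integers n ≥ 1, k ≥ 1, w ≥ 2 and a real ε with 0 < ε < 1 such that w ≥ k + n·k·(k+1)/ε. Consider the following random layered branching program of width w: choose a root ρ uniformly from {1,…,w}; for each level i ∈ {0,…,n−2}, each node u ∈ {1,…,w} and each bit b ∈ {0,1}, choose a successor σ_i(u,b) uniformly from {1,…,w}; for each node u ∈ {1,…,w} of level n−1 and each bit b ∈ {0,1}, choose an output bit τ(u,b) uniformly from {0,1}; all these choices are mutually independent. For an input a ∈ {0,1}^n, define the path v_0 = ρ, v_{i+1} = σ_i(v_i, a_i) for 0 ≤ i ≤ n−2, and the function value f(a) = τ(v_{n−1}, a_{n−1}). Then the random bits (f(a))_{a ∈ {0,1}^n} are (ε,k)-wise independent: for all pairwise distinct a_1, …, a_k ∈ {0,1}^n and all bits l_1, …, l_k ∈ {0,1}, |P(f(a_1) = l_1 ∧ … ∧ f(a_k) = l_k)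 − 2^{−k}| ≤ ε. -/
/-- The node of level `i` reached in a layered branching program of width `w`
on `n` variables with successor function `σ`, root `ρ`, on input `a`. -/
def obddPath (n w : ℕ) (σ : Fin (n - 1) → Fin w → Bool → Fin w) (ρ : Fin w)
    (a : Fin n → Bool) : ℕ → Fin w
  | 0 => ρ
  | i + 1 =>
      if h : i < n - 1 then
        σ ⟨i, h⟩ (obddPath n w σ ρ a i) (a ⟨i, by omega⟩)
      else obddPath n w σ ρ a i

/-- The function computed by a layered branching program of width `w`
on `n` variables given by a root, successor functions for levels `0, …, n−2`,
and output bits for the nodes of level `n−1`. -/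
def obddEval (n w : ℕ)
    (ω : Fin w × (Fin (n - 1) → Fin w → Bool → Fin w) × (Fin w → Bool → Bool))
    (a : Fin n → Bool) : Bool :=
  if h : 1 ≤ n then
    ω.2.2 (obddPath n w ω.2.1 ω.1 a (n - 1)) (a ⟨n - 1, by omega⟩)
  else false


lemma count_fixed {α γ : Type*} [Fintype α] [DecidableEq α] [Fintype γ] [DecidableEq γ] {k : ℕ}
    {p : Fin k → α} (hp : Function.Injective p) (v : Fin k → γ) :
    Fintype.card {g : α → γ // ∀ j, g (p j) = v j}
      = Fintype.card γ ^ (Fintype.card α - k) := by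
  classical
  have e : {g : α → γ // ∀ j, g (p j) = v j}
      ≃ ∀ x : α, {y : γ // ∀ j, p j = x → y = v j} :=
    { toFun := fun g x => ⟨g.1 x, fun j h => h ▸ g.2 j⟩
      invFun := fun h => ⟨fun x => (h x).1, fun j => (h (p j)).2 j rfl⟩
      left_inv := fun g => rfl
      right_inv := fun h => rfl }
  rw [Fintype.card_congr e, Fintype.card_pi]
  have hcard : ∀ x : α, Fintype.card {y : γ // ∀ j, p j = x → y = v j}
      = if ∃ j, p j = x then 1 else Fintype.card γ := by
    intro x
    split_ifs with hx
    · obtain ⟨j, hj⟩ := hx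
      rw [Fintype.card_eq_one_iff]
      refine ⟨⟨v j, fun j' h' => by rw [hp (h'.trans hj.symm)]⟩, fun z => ?_⟩
      exact Subtype.ext (z.2 j hj)
    · exact Fintype.card_congr (Equiv.subtypeUnivEquiv
        (fun y j h => absurd ⟨j, h⟩ hx))
  simp_rw [hcard]
  rw [Finset.prod_ite, Finset.prod_const, Finset.prod_const, one_pow, one_mul]
  congr 1
  have himg : Finset.univ.filter (fun x => ∃ j, p j = x) = Finset.univ.image p := by
    ext x; simp [eq_comm]
  rw [Finset.filter_not, Finset.card_sdiff_of_subset (Finset.filter_subset _ _), himg,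
    Finset.card_image_of_injective _ hp, Finset.card_univ, Finset.card_univ, Fintype.card_fin]

lemma count_pair {α γ : Type*} [Fintype α] [DecidableEq α] [Fintype γ] [DecidableEq γ] {p p' : α}
    (hne : p' ≠ p) :
    Fintype.card {g : α → γ // g p = g p'}
      = Fintype.card γ ^ (Fintype.card α - 1) := by
  classical
  have e : {g : α → γ // g p = g p'} ≃ ({x : α // x ≠ p} → γ) :=
    { toFun := fun g x => g.1 x.1
      invFun := fun f => ⟨fun x => if hx : x = p then f ⟨p', hne⟩ else f ⟨x, hx⟩, by
        simp [hne]⟩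
      left_inv := fun g => by
        apply Subtype.ext
        funext x
        by_cases hx : x = p
        · subst hx; simp [g.2]
        · simp [hx]
      right_inv := fun f => by
        funext x
        simp [x.2] }
  rw [Fintype.card_congr e, Fintype.card_fun]
  congr 1
  exact Set.card_ne_eq p

lemma count_fixed₂ {α₁ α₂ γ : Type*} [Fintype α₁] [DecidableEq α₁] [Fintype α₂]
    [DecidableEq α₂] [Fintype γ] [DecidableEq γ] {k : ℕ} {p : Fin k → α₁ × α₂}
    (hp : Function.Injective p) (v : Fin k → γ) :
    Fintype.card {g : α₁ → α₂ → γ // ∀ j, g (p j).1 (p j).2 = v j}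
      = Fintype.card γ ^ (Fintype.card α₁ * Fintype.card α₂ - k) := by
  classical
  have e : {f : α₁ × α₂ → γ // ∀ j, f (p j) = v j}
      ≃ {g : α₁ → α₂ → γ // ∀ j, g (p j).1 (p j).2 = v j} :=
    (Equiv.curry α₁ α₂ γ).subtypeEquiv (fun f => by
      constructor <;> intro h j <;> simpa using h j)
  rw [← Fintype.card_congr e, count_fixed hp v, Fintype.card_prod]

lemma count_pair₂ {α₁ α₂ γ : Type*} [Fintype α₁] [DecidableEq α₁] [Fintype α₂]
    [DecidableEq α₂] [Fintype γ] [DecidableEq γ] {p p' : α₁ × α₂} (hne : p' ≠ p) :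
    Fintype.card {g : α₁ → α₂ → γ // g p.1 p.2 = g p'.1 p'.2}
      = Fintype.card γ ^ (Fintype.card α₁ * Fintype.card α₂ - 1) := by
  classical
  have e : {f : α₁ × α₂ → γ // f p = f p'}
      ≃ {g : α₁ → α₂ → γ // g p.1 p.2 = g p'.1 p'.2} :=
    (Equiv.curry α₁ α₂ γ).subtypeEquiv (fun f => by simp [Equiv.curry])
  rw [← Fintype.card_congr e, count_pair hne, Fintype.card_prod]

lemma card_cond_prod {A B : Type*} [Fintype A] [Fintype B] (P : A → Prop)
    (R : A → B → Prop) [DecidablePred P] [∀ x, DecidablePred (R x)] (c : ℕ)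
    (hc : ∀ x, P x → Fintype.card {y : B // R x y} = c) :
    Fintype.card {z : A × B // P z.1 ∧ R z.1 z.2}
      = c * Fintype.card {x : A // P x} := by
  classical
  rw [Fintype.card_congr (Equiv.subtypeProdEquivSigmaSubtype (fun x y => P x ∧ R x y)),
    Fintype.card_sigma]
  have h : ∀ x : A, Fintype.card {y : B // P x ∧ R x y} = if P x then c else 0 := by
    intro x
    split_ifs with hx
    · rw [← hc x hx]
      exact Fintype.card_congr (Equiv.subtypeEquivRight (fun y => and_iff_right hx))
    · rw [Fintype.card_eq_zero_iff]
      exact ⟨fun z => hx z.2.1⟩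
  simp_rw [h]
  rw [Finset.sum_ite, Finset.sum_const, Finset.sum_const_zero, add_zero,
    Fintype.card_subtype, smul_eq_mul, mul_comm]

lemma obddPath_congr {n w : ℕ} {σ σ' : Fin (n-1) → Fin w → Bool → Fin w}
    {ρ : Fin w} {a : Fin n → Bool} (i : ℕ)
    (h : ∀ j : Fin (n-1), (j : ℕ) < i → σ j = σ' j) :
    obddPath n w σ ρ a i = obddPath n w σ' ρ a i := by
  induction i with
  | zero => rfl
  | succ i ih =>
    have ih' := ih (fun j hj => h j (Nat.lt_succ_of_lt hj))
    simp only [obddPath]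
    split_ifs with hi
    · rw [ih', h ⟨i, hi⟩ (Nat.lt_succ_self i)]
    · exact ih'

lemma merge_aux {n w : ℕ} (σ : Fin (n-1) → Fin w → Bool → Fin w) (ρ : Fin w)
    (b b' : Fin n → Bool) (hn : 1 ≤ n) :
    ∀ (c i : ℕ) (hi : i < n - 1),
    n - 1 - i ≤ c + 1 →
    (obddPath n w σ ρ b i, b ⟨i, by omega⟩) ≠ (obddPath n w σ ρ b' i, b' ⟨i, by omega⟩) →
    obddPath n w σ ρ b (n-1) = obddPath n w σ ρ b' (n-1) →
    ∃ ℓ : Fin (n-1),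
      (obddPath n w σ ρ b ℓ, b ⟨ℓ, by omega⟩) ≠ (obddPath n w σ ρ b' ℓ, b' ⟨ℓ, by omega⟩) ∧
      σ ℓ (obddPath n w σ ρ b ℓ) (b ⟨ℓ, by omega⟩)
        = σ ℓ (obddPath n w σ ρ b' ℓ) (b' ⟨ℓ, by omega⟩) := by
  intro c
  induction c with
  | zero =>
    intro i hi hc hargs hpath
    have hieq : n - 1 = i + 1 := by omega
    refine ⟨⟨i, hi⟩, hargs, ?_⟩
    rw [hieq] at hpath
    simpa only [obddPath, dif_pos hi] using hpath
  | succ c ih =>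
    intro i hi hc hargs hpath
    by_cases hnext : obddPath n w σ ρ b (i+1) = obddPath n w σ ρ b' (i+1)
    · refine ⟨⟨i, hi⟩, hargs, ?_⟩
      simpa only [obddPath, dif_pos hi] using hnext
    · have hi1 : i + 1 < n - 1 := by
        rcases Nat.lt_or_ge (i+1) (n-1) with h | h
        · exact h
        · exfalso
          have : n - 1 = i + 1 := by omega
          rw [this] at hpath
          exact hnext hpath
      refine ih (i+1) hi1 (by omega) ?_ hpath
      intro heq
      exact hnext (congrArg Prod.fst heq)

-- count of functions Q × T with endpoint constraints
lemma count_main {w k : ℕ} {Q : Type*} [Fintype Q] (E : Fin k → Q → Fin w × Bool)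
    (lv : Fin k → Bool) (hkw : k ≤ 2 * w) :
    Fintype.card {z : Q × (Fin w → Bool → Bool) //
        Function.Injective (fun j => E j z.1) ∧
        ∀ j, z.2 (E j z.1).1 (E j z.1).2 = lv j}
      = 2 ^ (2 * w - k) *
        Fintype.card {q : Q // Function.Injective (fun j => E j q)} := by
  have hc : ∀ q : Q, (Function.Injective fun j => E j q) →
      Fintype.card {τ : Fin w → Bool → Bool // ∀ j, τ (E j q).1 (E j q).2 = lv j}
        = 2 ^ (2 * w - k) := by
    intro q hq
    rw [count_fixed₂ hq lv]
    simp only [Fintype.card_fin, Fintype.card_bool]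
    congr 1
    omega
  exact card_cond_prod (fun q : Q => Function.Injective fun j => E j q)
    (fun q (τ : Fin w → Bool → Bool) => ∀ j, τ (E j q).1 (E j q).2 = lv j) (2 ^ (2 * w - k)) hc

lemma count_main2 {Q B : Type*} [Fintype Q] [Fintype B] (P : Q → Prop) [DecidablePred P] :
    Fintype.card {z : Q × B // P z.1} = Fintype.card B * Fintype.card {q : Q // P q} := by
  have e : {z : Q × B // P z.1} ≃ {z : Q × B // P z.1 ∧ True} :=
    Equiv.subtypeEquivRight (fun z => (iff_of_eq (and_true _)).symm)
  rw [Fintype.card_congr e, card_cond_prod P (fun _ _ => True) (Fintype.card B)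
    (fun q _ => Fintype.card_congr (Equiv.subtypeUnivEquiv (fun _ => trivial)))]

lemma count_merge {w : ℕ} (hw : 1 ≤ w) {Q : Type*} [Fintype Q]
    (D : Q → Prop) [DecidablePred D] (p p' : Q → Fin w × Bool)
    (hD : ∀ q, D q → p' q ≠ p q) :
    Fintype.card {z : Q × (Fin w → Bool → Fin w) //
        D z.1 ∧ z.2 (p z.1).1 (p z.1).2 = z.2 (p' z.1).1 (p' z.1).2} * w
      ≤ Fintype.card (Q × (Fin w → Bool → Fin w)) := by
  have hc : ∀ q : Q, D q →
      Fintype.card {x : Fin w → Bool → Fin w //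
        x (p q).1 (p q).2 = x (p' q).1 (p' q).2} = w ^ (w * 2 - 1) := by
    intro q hq
    rw [count_pair₂ (hD q hq)]
    simp [Fintype.card_fin, Fintype.card_bool]
  rw [card_cond_prod D
    (fun q (x : Fin w → Bool → Fin w) => x (p q).1 (p q).2 = x (p' q).1 (p' q).2)
    (w ^ (w * 2 - 1)) hc]
  have hβ : Fintype.card (Fin w → Bool → Fin w) = w ^ (w * 2) := by
    simp [Fintype.card_fun, ← pow_mul, mul_comm]
  rw [Fintype.card_prod, hβ]
  calc w ^ (w * 2 - 1) * Fintype.card {x : Q // D x} * w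
      = w ^ (w * 2 - 1) * w * Fintype.card {x : Q // D x} := by ring
    _ = w ^ (w * 2) * Fintype.card {x : Q // D x} := by
        have h21 : w * 2 - 1 + 1 = w * 2 := by omega
        rw [← pow_succ, h21]
    _ ≤ w ^ (w * 2) * Fintype.card Q := by
        exact Nat.mul_le_mul_left _ (Fintype.card_subtype_le _)
    _ = Fintype.card Q * w ^ (w * 2) := by ring

lemma count_merge_event {n w : ℕ} (hw : 1 ≤ w) (hn : 1 ≤ n)
    (bj bj' : Fin n → Bool) (ℓ : Fin (n-1)) :
    Fintype.card {ω : Fin w × (Fin (n-1) → Fin w → Bool → Fin w) × (Fin w → Bool → Bool) //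
        ((obddPath n w ω.2.1 ω.1 bj ℓ, bj ⟨ℓ, by omega⟩) : Fin w × Bool)
          ≠ (obddPath n w ω.2.1 ω.1 bj' ℓ, bj' ⟨ℓ, by omega⟩) ∧
        ω.2.1 ℓ (obddPath n w ω.2.1 ω.1 bj ℓ) (bj ⟨ℓ, by omega⟩)
          = ω.2.1 ℓ (obddPath n w ω.2.1 ω.1 bj' ℓ) (bj' ⟨ℓ, by omega⟩)} * w
      ≤ Fintype.card (Fin w × (Fin (n-1) → Fin w → Bool → Fin w) × (Fin w → Bool → Bool)) := by
  classical
  set β := Fin w → Bool → Fin w with hβdef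
  set Q' := Fin w × ({i : Fin (n-1) // i ≠ ℓ} → β) × (Fin w → Bool → Bool) with hQ'def
  -- reconstruction of a full successor family
  set recon : Q' → β → (Fin (n-1) → Fin w → Bool → Fin w) :=
    fun y x i => if h : i = ℓ then x else y.2.1 ⟨i, h⟩ with hrecon
  have hreconℓ : ∀ y x, recon y x ℓ = x := fun y x => dif_pos rfl
  have hrecon_ne : ∀ y x (i : Fin (n-1)) (h : i ≠ ℓ), recon y x i = y.2.1 ⟨i, h⟩ :=
    fun y x i h => dif_neg h
  set x₀ : β := fun _ _ => ⟨0, hw⟩ with hx₀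
  -- the splitting equivalence
  set e₂ : (Fin w × (Fin (n-1) → Fin w → Bool → Fin w) × (Fin w → Bool → Bool)) ≃ Q' × β :=
    { toFun := fun ω => ((ω.1, fun i => ω.2.1 i.1, ω.2.2), ω.2.1 ℓ)
      invFun := fun z => (z.1.1, recon z.1 z.2, z.1.2.2)
      left_inv := fun ω => by
        refine Prod.ext rfl (Prod.ext ?_ rfl)
        funext i
        by_cases h : i = ℓ
        · subst h; simp [hrecon]
        · simp [hrecon, h]
      right_inv := fun z => by
        refine Prod.ext (Prod.ext rfl (Prod.ext ?_ rfl)) (hreconℓ _ _)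
        funext i
        simp [hrecon, i.2] } with he₂
  -- path at level ℓ does not depend on the value of σ at ℓ
  have key : ∀ (b : Fin n → Bool) (y : Q') (x : β),
      obddPath n w (recon y x) y.1 b ℓ = obddPath n w (recon y x₀) y.1 b ℓ := by
    intro b y x
    refine obddPath_congr ℓ (fun i hi => ?_)
    have hne : i ≠ ℓ := fun h => by subst h; exact lt_irrefl _ hi
    rw [hrecon_ne y x i hne, hrecon_ne y x₀ i hne]
  -- also in the form needed for e₂ ω
  have key2 : ∀ (b : Fin n → Bool) (ω : Fin w × (Fin (n-1) → Fin w → Bool → Fin w) ×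
      (Fin w → Bool → Bool)),
      obddPath n w (recon (ω.1, fun i => ω.2.1 i.1, ω.2.2) x₀) ω.1 b ℓ
        = obddPath n w ω.2.1 ω.1 b ℓ := by
    intro b ω
    refine obddPath_congr ℓ (fun i hi => ?_)
    have hne : i ≠ ℓ := fun h => by subst h; exact lt_irrefl _ hi
    rw [hrecon_ne _ _ i hne]
  -- endpoints as functions of Q'
  set pb : Q' → Fin w × Bool := fun y =>
    (obddPath n w (recon y x₀) y.1 bj ℓ, bj ⟨ℓ, by omega⟩) with hpb
  set pb' : Q' → Fin w × Bool := fun y =>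
    (obddPath n w (recon y x₀) y.1 bj' ℓ, bj' ⟨ℓ, by omega⟩) with hpb'
  set D : Q' → Prop := fun y => pb y ≠ pb' y with hD
  have etrans : {ω : Fin w × (Fin (n-1) → Fin w → Bool → Fin w) × (Fin w → Bool → Bool) //
        ((obddPath n w ω.2.1 ω.1 bj ℓ, bj ⟨ℓ, by omega⟩) : Fin w × Bool)
          ≠ (obddPath n w ω.2.1 ω.1 bj' ℓ, bj' ⟨ℓ, by omega⟩) ∧
        ω.2.1 ℓ (obddPath n w ω.2.1 ω.1 bj ℓ) (bj ⟨ℓ, by omega⟩)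
          = ω.2.1 ℓ (obddPath n w ω.2.1 ω.1 bj' ℓ) (bj' ⟨ℓ, by omega⟩)}
      ≃ {z : Q' × β // D z.1 ∧ z.2 (pb z.1).1 (pb z.1).2 = z.2 (pb' z.1).1 (pb' z.1).2} := by
    refine e₂.subtypeEquiv (fun ω => ?_)
    have h1 : pb (e₂ ω).1 = (obddPath n w ω.2.1 ω.1 bj ℓ, bj ⟨ℓ, by omega⟩) := by
      simp only [hpb, he₂, Equiv.coe_fn_mk]
      rw [key2]
    have h2 : pb' (e₂ ω).1 = (obddPath n w ω.2.1 ω.1 bj' ℓ, bj' ⟨ℓ, by omega⟩) := by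
      simp only [hpb', he₂, Equiv.coe_fn_mk]
      rw [key2]
    have h3 : (e₂ ω).2 = ω.2.1 ℓ := rfl
    constructor
    · rintro ⟨hA, hB⟩
      refine ⟨?_, ?_⟩
      · show pb (e₂ ω).1 ≠ pb' (e₂ ω).1
        rw [h1, h2]; exact hA
      · rw [h3, h1, h2]; exact hB
    · rintro ⟨hA, hB⟩
      have hA' : pb (e₂ ω).1 ≠ pb' (e₂ ω).1 := hA
      rw [h1, h2] at hA'
      rw [h3, h1, h2] at hB
      exact ⟨hA', hB⟩
  rw [Fintype.card_congr etrans]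
  have := count_merge hw D pb pb' (fun q hq => (hq ∘ Eq.symm : pb' q ≠ pb q))
  calc Fintype.card {z : Q' × β //
        D z.1 ∧ z.2 (pb z.1).1 (pb z.1).2 = z.2 (pb' z.1).1 (pb' z.1).2} * w
      ≤ Fintype.card (Q' × β) := this
    _ = _ := (Fintype.card_congr e₂).symm

set_option maxHeartbeats 2000000 in
/-- Auxiliary version of statement 14. -/
theorem stmt_14_aux (n k w : ℕ) (hn : 1 ≤ n) (hk : 1 ≤ k) (hw : 2 ≤ w)
    (ε : ℝ) (hε0 : 0 < ε) (hε1 : ε < 1)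
    (hwk : (k : ℝ) + n * k * (k + 1) / ε ≤ w)
    (a : Fin k → Fin n → Bool) (ha : Function.Injective a)
    (lv : Fin k → Bool) :
    |((Finset.univ.filter
        (fun ω : Fin w × (Fin (n - 1) → Fin w → Bool → Fin w) ×
            (Fin w → Bool → Bool) =>
          ∀ j, obddEval n w ω (a j) = lv j)).card : ℝ) /
        (Fintype.card (Fin w × (Fin (n - 1) → Fin w → Bool → Fin w) ×
          (Fin w → Bool → Bool)) : ℝ) -
      (1 / 2) ^ k| ≤ ε := by
  classical
  have hn1 : n - 1 < n := by omega
  have hw1 : 1 ≤ w := by omega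
  -- basic real facts
  have hkR : (k : ℝ) ≤ w := by
    have h0 : (0:ℝ) ≤ (n : ℝ) * k * (k+1) / ε :=
      div_nonneg (by positivity) hε0.le
    linarith
  have hkw2 : k ≤ 2 * w := by
    have : k ≤ w := by exact_mod_cast hkR
    omega
  have hεw : ((n : ℝ) * k * (k+1)) ≤ ε * w := by
    have h1 : (n : ℝ) * k * (k+1) / ε ≤ (w : ℝ) - k := by linarith
    have h2 : (n : ℝ) * k * (k+1) ≤ ((w : ℝ) - k) * ε := (div_le_iff₀ hε0).mp h1
    have h3 : ((w : ℝ) - k) * ε ≤ (w : ℝ) * ε := by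
      have : (0:ℝ) ≤ k := Nat.cast_nonneg k
      nlinarith
    linarith [h2, h3]
  -- endpoint function and injectivity predicate
  set E : Fin k → (Fin w × (Fin (n-1) → Fin w → Bool → Fin w)) → Fin w × Bool :=
    fun j q => (obddPath n w q.2 q.1 (a j) (n-1), a j ⟨n-1, hn1⟩) with hE
  set Gp : (Fin w × (Fin (n-1) → Fin w → Bool → Fin w)) → Prop :=
    fun q => Function.Injective (fun j => E j q) with hGp
  have h_eval : ∀ (ω : Fin w × (Fin (n-1) → Fin w → Bool → Fin w) × (Fin w → Bool → Bool))
      (j : Fin k), obddEval n w ω (a j)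
        = ω.2.2 (E j (ω.1, ω.2.1)).1 (E j (ω.1, ω.2.1)).2 := by
    intro ω j
    rw [obddEval, dif_pos hn]
  -- the re-association equivalence
  set e₁ := (Equiv.prodAssoc (Fin w) (Fin (n-1) → Fin w → Bool → Fin w)
    (Fin w → Bool → Bool)).symm with he₁
  -- count of the target event intersected with the good event
  have hTG : Fintype.card {ω : Fin w × (Fin (n-1) → Fin w → Bool → Fin w) ×
        (Fin w → Bool → Bool) // (∀ j, obddEval n w ω (a j) = lv j) ∧ Gp (ω.1, ω.2.1)}
      = 2 ^ (2*w - k) * Fintype.card {q // Gp q} := by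
    have etr : {ω : Fin w × (Fin (n-1) → Fin w → Bool → Fin w) ×
        (Fin w → Bool → Bool) // (∀ j, obddEval n w ω (a j) = lv j) ∧ Gp (ω.1, ω.2.1)}
        ≃ {z : (Fin w × (Fin (n-1) → Fin w → Bool → Fin w)) × (Fin w → Bool → Bool) //
          Function.Injective (fun j => E j z.1) ∧ ∀ j, z.2 (E j z.1).1 (E j z.1).2 = lv j} := by
      refine e₁.subtypeEquiv (fun ω => ?_)
      constructor
      · rintro ⟨h1, h2⟩
        refine ⟨h2, fun j => ?_⟩
        have := h1 j
        rw [h_eval ω j] at this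
        exact this
      · rintro ⟨h2, h1⟩
        refine ⟨fun j => ?_, h2⟩
        rw [h_eval ω j]
        exact h1 j
    rw [Fintype.card_congr etr]
    exact count_main E lv hkw2
  -- count of the good event
  have hG : Fintype.card {ω : Fin w × (Fin (n-1) → Fin w → Bool → Fin w) ×
        (Fin w → Bool → Bool) // Gp (ω.1, ω.2.1)}
      = 2 ^ (2*w) * Fintype.card {q // Gp q} := by
    have etr : {ω : Fin w × (Fin (n-1) → Fin w → Bool → Fin w) ×
        (Fin w → Bool → Bool) // Gp (ω.1, ω.2.1)}
        ≃ {z : (Fin w × (Fin (n-1) → Fin w → Bool → Fin w)) × (Fin w → Bool → Bool) //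
          Gp z.1} := e₁.subtypeEquiv (fun ω => Iff.rfl)
    rw [Fintype.card_congr etr, count_main2 Gp]
    congr 1
    rw [Fintype.card_fun, Fintype.card_fun, Fintype.card_bool, Fintype.card_fin, pow_mul]
  -- merge events
  set M : Fin k × Fin k × Fin (n-1) →
      (Fin w × (Fin (n-1) → Fin w → Bool → Fin w) × (Fin w → Bool → Bool)) → Prop :=
    fun x ω =>
      ((obddPath n w ω.2.1 ω.1 (a x.1) x.2.2, a x.1 ⟨x.2.2, by omega⟩) : Fin w × Bool)
        ≠ (obddPath n w ω.2.1 ω.1 (a x.2.1) x.2.2, a x.2.1 ⟨x.2.2, by omega⟩) ∧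
      ω.2.1 x.2.2 (obddPath n w ω.2.1 ω.1 (a x.1) x.2.2) (a x.1 ⟨x.2.2, by omega⟩)
        = ω.2.1 x.2.2 (obddPath n w ω.2.1 ω.1 (a x.2.1) x.2.2) (a x.2.1 ⟨x.2.2, by omega⟩)
    with hM
  have hMbound : ∀ x, (Finset.univ.filter (M x)).card * w
      ≤ Fintype.card (Fin w × (Fin (n-1) → Fin w → Bool → Fin w) × (Fin w → Bool → Bool)) := by
    intro x
    rw [← Fintype.card_subtype]
    exact count_merge_event hw1 hn (a x.1) (a x.2.1) x.2.2
  -- the union bound inclusion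
  have hGc_sub : ∀ ω : Fin w × (Fin (n-1) → Fin w → Bool → Fin w) × (Fin w → Bool → Bool),
      ¬ Gp (ω.1, ω.2.1) → ∃ x, M x ω := by
    intro ω hGc
    obtain ⟨j, j', hEeq, hjj⟩ := Function.not_injective_iff.mp hGc
    have hE1 : obddPath n w ω.2.1 ω.1 (a j) (n-1) = obddPath n w ω.2.1 ω.1 (a j') (n-1) :=
      congrArg Prod.fst hEeq
    have hE2 : a j ⟨n-1, hn1⟩ = a j' ⟨n-1, hn1⟩ := congrArg Prod.snd hEeq
    obtain ⟨i, hi⟩ := Function.ne_iff.mp (fun h : a j = a j' => hjj (ha h))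
    have hiv : (i : ℕ) ≠ n - 1 := by
      intro h
      apply hi
      have : i = ⟨n-1, hn1⟩ := Fin.ext h
      rw [this]
      exact hE2
    have hilt : (i : ℕ) < n - 1 := by
      have := i.isLt
      omega
    have hargs : ((obddPath n w ω.2.1 ω.1 (a j) i, a j ⟨i, by omega⟩) : Fin w × Bool)
        ≠ (obddPath n w ω.2.1 ω.1 (a j') i, a j' ⟨i, by omega⟩) := by
      intro hEq
      apply hi
      have hb : a j ⟨(i : ℕ), by omega⟩ = a j' ⟨(i : ℕ), by omega⟩ := congrArg Prod.snd hEq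
      have hieta : (⟨(i : ℕ), by omega⟩ : Fin n) = i := Fin.ext rfl
      rwa [hieta] at hb
    obtain ⟨ℓ, hld, hlm⟩ := merge_aux ω.2.1 ω.1 (a j) (a j') hn n i hilt (by omega) hargs hE1
    exact ⟨(j, j', ℓ), hld, hlm⟩
  -- counting the bad event
  have hGcBound : Fintype.card {ω : Fin w × (Fin (n-1) → Fin w → Bool → Fin w) ×
        (Fin w → Bool → Bool) // ¬ Gp (ω.1, ω.2.1)} * w
      ≤ k * k * (n-1) *
        Fintype.card (Fin w × (Fin (n-1) → Fin w → Bool → Fin w) × (Fin w → Bool → Bool)) := by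
    rw [Fintype.card_subtype]
    have hsub : Finset.univ.filter (fun ω : Fin w × (Fin (n-1) → Fin w → Bool → Fin w) ×
          (Fin w → Bool → Bool) => ¬ Gp (ω.1, ω.2.1))
        ⊆ Finset.univ.biUnion (fun x : Fin k × Fin k × Fin (n-1) =>
            Finset.univ.filter (M x)) := by
      intro ω hω
      rw [Finset.mem_filter] at hω
      obtain ⟨x, hx⟩ := hGc_sub ω hω.2
      exact Finset.mem_biUnion.mpr ⟨x, Finset.mem_univ x, Finset.mem_filter.mpr ⟨Finset.mem_univ ω, hx⟩⟩
    calc (Finset.univ.filter (fun ω : Fin w × (Fin (n-1) → Fin w → Bool → Fin w) ×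
          (Fin w → Bool → Bool) => ¬ Gp (ω.1, ω.2.1))).card * w
        ≤ (Finset.univ.biUnion (fun x : Fin k × Fin k × Fin (n-1) =>
            Finset.univ.filter (M x))).card * w :=
          Nat.mul_le_mul_right w (Finset.card_le_card hsub)
      _ ≤ (∑ x : Fin k × Fin k × Fin (n-1), (Finset.univ.filter (M x)).card) * w :=
          Nat.mul_le_mul_right w Finset.card_biUnion_le
      _ = ∑ x : Fin k × Fin k × Fin (n-1), (Finset.univ.filter (M x)).card * w := by
          rw [Finset.sum_mul]
      _ ≤ ∑ _x : Fin k × Fin k × Fin (n-1),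
            Fintype.card (Fin w × (Fin (n-1) → Fin w → Bool → Fin w) × (Fin w → Bool → Bool)) :=
          Finset.sum_le_sum (fun x _ => hMbound x)
      _ = k * k * (n-1) *
            Fintype.card (Fin w × (Fin (n-1) → Fin w → Bool → Fin w) × (Fin w → Bool → Bool)) := by
          simp only [Finset.sum_const, Finset.card_univ, smul_eq_mul,
            Fintype.card_prod, Fintype.card_fin]
          ring
  -- partitions
  have hsplit1 : (Finset.univ.filter
      (fun ω : Fin w × (Fin (n - 1) → Fin w → Bool → Fin w) × (Fin w → Bool → Bool) =>
        ∀ j, obddEval n w ω (a j) = lv j)).card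
      = Fintype.card {ω : Fin w × (Fin (n-1) → Fin w → Bool → Fin w) ×
          (Fin w → Bool → Bool) // (∀ j, obddEval n w ω (a j) = lv j) ∧ Gp (ω.1, ω.2.1)}
        + Fintype.card {ω : Fin w × (Fin (n-1) → Fin w → Bool → Fin w) ×
          (Fin w → Bool → Bool) // (∀ j, obddEval n w ω (a j) = lv j) ∧ ¬ Gp (ω.1, ω.2.1)} := by
    rw [Fintype.card_subtype, Fintype.card_subtype, ← Finset.filter_filter, ← Finset.filter_filter,
      Finset.card_filter_add_card_filter_not]
  have hsplit2 : Fintype.card (Fin w × (Fin (n-1) → Fin w → Bool → Fin w) × (Fin w → Bool → Bool))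
      = Fintype.card {ω : Fin w × (Fin (n-1) → Fin w → Bool → Fin w) ×
          (Fin w → Bool → Bool) // Gp (ω.1, ω.2.1)}
        + Fintype.card {ω : Fin w × (Fin (n-1) → Fin w → Bool → Fin w) ×
          (Fin w → Bool → Bool) // ¬ Gp (ω.1, ω.2.1)} := by
    rw [Fintype.card_subtype, Fintype.card_subtype,
      Finset.card_filter_add_card_filter_not, Finset.card_univ]
  have hTGc_le : Fintype.card {ω : Fin w × (Fin (n-1) → Fin w → Bool → Fin w) ×
        (Fin w → Bool → Bool) // (∀ j, obddEval n w ω (a j) = lv j) ∧ ¬ Gp (ω.1, ω.2.1)}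
      ≤ Fintype.card {ω : Fin w × (Fin (n-1) → Fin w → Bool → Fin w) ×
        (Fin w → Bool → Bool) // ¬ Gp (ω.1, ω.2.1)} :=
    Fintype.card_subtype_mono _ _ (fun ω h => h.2)
  -- name the quantities
  obtain ⟨C, hCdef⟩ : ∃ c : ℕ, Fintype.card {q // Gp q} = c := ⟨_, rfl⟩
  rw [hCdef] at hTG hG
  obtain ⟨B1, hB1def⟩ : ∃ c : ℕ, Fintype.card {ω : Fin w × (Fin (n-1) → Fin w → Bool → Fin w) ×
      (Fin w → Bool → Bool) // (∀ j, obddEval n w ω (a j) = lv j) ∧ ¬ Gp (ω.1, ω.2.1)} = c := ⟨_, rfl⟩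
  rw [hB1def] at hsplit1 hTGc_le
  obtain ⟨B2, hB2def⟩ : ∃ c : ℕ, Fintype.card {ω : Fin w × (Fin (n-1) → Fin w → Bool → Fin w) ×
      (Fin w → Bool → Bool) // ¬ Gp (ω.1, ω.2.1)} = c := ⟨_, rfl⟩
  rw [hB2def] at hsplit2 hTGc_le hGcBound
  rw [hTG] at hsplit1
  rw [hG] at hsplit2
  have hWpos : 0 < Fintype.card (Fin w × (Fin (n-1) → Fin w → Bool → Fin w) ×
      (Fin w → Bool → Bool)) := by
    refine Fintype.card_pos_iff.mpr ?_
    exact ⟨⟨⟨0, by omega⟩, fun _ _ _ => ⟨0, by omega⟩, fun _ _ => false⟩⟩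
  obtain ⟨W, hWdef⟩ : ∃ c : ℕ, Fintype.card (Fin w × (Fin (n-1) → Fin w → Bool → Fin w) ×
      (Fin w → Bool → Bool)) = c := ⟨_, rfl⟩
  rw [hWdef] at hsplit2 hGcBound hWpos ⊢
  obtain ⟨N, hNdef⟩ : ∃ c : ℕ, (Finset.univ.filter
      (fun ω : Fin w × (Fin (n - 1) → Fin w → Bool → Fin w) × (Fin w → Bool → Bool) =>
        ∀ j, obddEval n w ω (a j) = lv j)).card = c := ⟨_, rfl⟩
  rw [hNdef] at hsplit1 ⊢
  -- now pure arithmetic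
  have hNr : (N : ℝ) = 2 ^ (2*w - k) * C + B1 := by exact_mod_cast hsplit1
  have hWr : (W : ℝ) = 2 ^ (2*w) * C + B2 := by exact_mod_cast hsplit2
  have hWR : (0:ℝ) < W := by exact_mod_cast hWpos
  have hWne : (W : ℝ) ≠ 0 := ne_of_gt hWR
  have hpow : ((2:ℝ)) ^ (2*w - k) = 2 ^ (2*w) * (1/2 : ℝ) ^ k := by
    have h1 : ((2:ℝ)) ^ (2*w - k) * 2 ^ k = 2 ^ (2*w) := by
      rw [← pow_add]
      congr 1
      omega
    have h2k : ((2:ℝ)^k) ≠ 0 := by positivity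
    have h2 : ((1:ℝ)/2) ^ k = ((2:ℝ)^k)⁻¹ := by rw [one_div, inv_pow]
    rw [h2, ← h1, mul_assoc, mul_inv_cancel₀ h2k, mul_one]
  have hB2W : (B2 : ℝ) ≤ ε * W := by
    have h := (Nat.cast_le (α := ℝ)).mpr hGcBound
    simp only [Nat.cast_mul] at h
    have hmn : ((n-1 : ℕ) : ℝ) ≤ (n : ℝ) := by
      have h' : (n-1 : ℕ) ≤ n := Nat.sub_le n 1
      exact_mod_cast h'
    have hik : (k:ℝ) * k * ((n-1:ℕ):ℝ) ≤ (n:ℝ) * k * (k+1) := by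
      have hk1 : (1:ℝ) ≤ k := by exact_mod_cast hk
      have hmnn : (0:ℝ) ≤ ((n-1:ℕ):ℝ) := Nat.cast_nonneg _
      nlinarith
    have hwR : (0:ℝ) < w := by
      have hx : (0:ℕ) < w := by omega
      exact_mod_cast hx
    have hWnn : (0:ℝ) ≤ (W:ℝ) := Nat.cast_nonneg W
    nlinarith [h, mul_le_mul_of_nonneg_right hik hWnn,
      mul_le_mul_of_nonneg_right hεw hWnn, hwR]
  have hkey : (N : ℝ) / W - (1/2:ℝ)^k = ((B1 : ℝ) - (1/2:ℝ)^k * B2) / W := by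
    have hnum : (N : ℝ) - (1/2:ℝ)^k * W = (B1 : ℝ) - (1/2:ℝ)^k * B2 := by
      rw [hNr, hWr, hpow]
      ring
    rw [← hnum, sub_div, mul_div_assoc, div_self hWne, mul_one]
  rw [hkey]
  have hB1B2 : (B1 : ℝ) ≤ B2 := by exact_mod_cast hTGc_le
  have habs : |((B1 : ℝ) - (1/2:ℝ)^k * B2)| ≤ (B2 : ℝ) := by
    rw [abs_sub_le_iff]
    have hhalf : (0:ℝ) ≤ (1/2:ℝ)^k := by positivity
    have hhalf1 : ((1:ℝ)/2)^k ≤ 1 := by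
      apply pow_le_one₀ <;> norm_num
    have hB2nn : (0:ℝ) ≤ B2 := Nat.cast_nonneg B2
    have hB1nn : (0:ℝ) ≤ B1 := Nat.cast_nonneg B1
    constructor
    · nlinarith
    · nlinarith
  calc |((B1 : ℝ) - (1/2:ℝ)^k * B2) / W| = |((B1 : ℝ) - (1/2:ℝ)^k * B2)| / W := by
        rw [abs_div, abs_of_pos hWR]
    _ ≤ (B2 : ℝ) / W := by gcongr
    _ ≤ ε := by
        rw [div_le_iff₀ hWR]
        linarith [hB2W]

/-- A uniformly random layered branching program of width
`w ≥ k + n·k·(k+1)/ε` (root, all successors and all output bits chosen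
independently and uniformly) computes `(ε, k)`-wise independent random bits:
for pairwise distinct inputs `a₁, …, a_k` and bits `l₁, …, l_k`,
`|P(f(a₁) = l₁ ∧ … ∧ f(a_k) = l_k) − 2^{−k}| ≤ ε`. -/
theorem stmt_14 (n k w : ℕ) (hn : 1 ≤ n) (hk : 1 ≤ k) (hw : 2 ≤ w)
    (ε : ℝ) (hε0 : 0 < ε) (hε1 : ε < 1)
    (hwk : (k : ℝ) + n * k * (k + 1) / ε ≤ w)
    (a : Fin k → Fin n → Bool) (ha : Function.Injective a)
    (lv : Fin k → Bool) :
    |((Finset.univ.filter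
        (fun ω : Fin w × (Fin (n - 1) → Fin w → Bool → Fin w) ×
            (Fin w → Bool → Bool) =>
          ∀ j, obddEval n w ω (a j) = lv j)).card : ℝ) /
        (Fintype.card (Fin w × (Fin (n - 1) → Fin w → Bool → Fin w) ×
          (Fin w → Bool → Bool)) : ℝ) -
      (1 / 2) ^ k| ≤ ε :=
  stmt_14_aux n k w hn hk hw ε hε0 hε1 hwk a ha lv
end
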